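/- arXiv:1901.07470 — 6 statements merged into one kernel-verified Lean document; each statement's English description precedes it below -/
import Mathlib

section
/- (Uniqueness of the Cauchy problem for KdV; Lemma 6.6 of the paper.) Let t0 be a real number and let v1, v2 : ℝ × ℝ → ℝ (written v(x,t)) be such that for every t ≥ t0 the functions x ↦ vj(x,t) are three times continuously differentiable, for every x the functions t ↦ vj(x,t) are differentiable on [t0, ∞), and both satisfy the KdV equation ∂t vj + vj ∂x vj + (1/12) ∂x³ vj = 0 for all x ∈ ℝ and all t ≥ t0, with the same initial data v1(x,t0) = v2(x,t0) for all x ∈ ℝ. Set ω = v1 − v2 and assume: (i) for every t ≥ t0, ω(x,t) → 0, ∂x ω(x,t) → 0, and ω(x,t)·∂x² ω(x,t) → 0 as x → ±∞; (ii) for every t ≥ t0 the function x ↦ ω(x,t)² is integrable on ℝ; (iii) for every T > t0, sup over t ∈ [t0,T] of sup over x ∈ ℝ of |∂x v1(x,t)| is finite; (iv) (regularity permitting differentiation under the integral sign) the function q(t) = ∫_ℝ ω(x,t)² dx is differentiable on [t0,∞) with q'(t) = ∫_ℝ 2 ω(x,t) ∂t ω(x,t) dx, and for every t ≥ t0 the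 functions x ↦ ω ∂t ω, x ↦ ω ∂x³ ω and x ↦ ω² ∂x ω are integrable on ℝ. Then v1(x,t) = v2(x,t) for all x ∈ ℝ and all t ≥ t0. -/
open MeasureTheory Filter Set
open Topology

private lemma kdv_not_integrable_aux {g : ℝ → ℝ} {c X : ℝ} (hc : 0 < c) (hX : 0 < X)
    (hg0 : ∀ x, 0 ≤ g x) (hg : ∀ x ∈ Set.Ioi X, c * x⁻¹ ≤ g x)
    (hgi : IntegrableOn g (Ioi X)) : False := by
  have h1 : IntegrableOn (fun x : ℝ => c * x⁻¹) (Ioi X) := by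
    apply Integrable.mono' hgi ((measurable_const.mul measurable_inv).aestronglyMeasurable)
    filter_upwards [ae_restrict_mem measurableSet_Ioi] with x hx
    have hx0 : (0:ℝ) < x := hX.trans hx
    rw [Real.norm_eq_abs, Pi.mul_apply, abs_of_nonneg (mul_nonneg hc.le (inv_nonneg.mpr hx0.le))]
    exact hg x hx
  have h2 : IntegrableOn (fun x : ℝ => x⁻¹) (Ioi X) := by
    have h : IntegrableOn (fun x : ℝ => c⁻¹ * (c * x⁻¹)) (Ioi X) := h1.const_mul c⁻¹
    apply h.congr_fun ?_ measurableSet_Ioi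
    intro x _
    field_simp
  have h3 : IntegrableOn (fun x : ℝ => x ^ (-1 : ℝ)) (Ioi X) := by
    apply h2.congr_fun ?_ measurableSet_Ioi
    intro x _
    simp [Real.rpow_neg_one]
  rw [integrableOn_Ioi_rpow_iff hX] at h3
  linarith

private lemma kdv_limit_zero_atTop {u g : ℝ → ℝ} {L b : ℝ} (hb : 0 < b)
    (hg0 : ∀ x, 0 ≤ g x) (hgi : Integrable g)
    (hu : ∀ x, |u x| ≤ b * (1 + |x|))
    (h : Tendsto (fun x => u x * g x) atTop (𝓝 L)) : L = 0 := by
  by_contra hL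
  have habs : Tendsto (fun x => |u x * g x|) atTop (𝓝 |L|) := h.abs
  have hLpos : 0 < |L| := abs_pos.mpr hL
  have hev : ∀ᶠ x in atTop, |L| / 2 ≤ |u x * g x| :=
    habs.eventually_const_le (by linarith)
  obtain ⟨X, hX⟩ := (hev.and (eventually_ge_atTop (1 : ℝ))).exists_forall_of_atTop
  set c : ℝ := |L| / (4 * b) with hc
  have hcpos : 0 < c := by positivity
  refine kdv_not_integrable_aux hcpos (lt_of_lt_of_le zero_lt_one (hX X le_rfl).2) hg0
    (fun x hx => ?_) hgi.integrableOn
  obtain ⟨h1, h2⟩ := hX x (le_of_lt hx)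
  have hx1 : (1:ℝ) ≤ x := le_trans (hX X le_rfl).2 (le_of_lt hx)
  have hx0 : (0:ℝ) < x := by linarith
  have hub : |u x| ≤ 2 * b * x := by
    have h3 := hu x
    rw [abs_of_nonneg hx0.le] at h3
    nlinarith
  have hgx : |L| / 2 ≤ 2 * b * x * g x := by
    rw [abs_mul, abs_of_nonneg (hg0 x)] at h1
    nlinarith [mul_le_mul_of_nonneg_right hub (hg0 x)]
  have hceq : c * x⁻¹ = |L| / 2 / (2 * b * x) := by
    rw [hc]
    field_simp [hb.ne', hx0.ne']
    norm_num
  rw [hceq, div_le_iff₀ (by positivity)]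
  linarith [hgx, mul_comm (g x) (2 * b * x)]

private lemma kdv_limit_zero_atBot {u g : ℝ → ℝ} {L b : ℝ} (hb : 0 < b)
    (hg0 : ∀ x, 0 ≤ g x) (hgi : Integrable g)
    (hu : ∀ x, |u x| ≤ b * (1 + |x|))
    (h : Tendsto (fun x => u x * g x) atBot (𝓝 L)) : L = 0 := by
  have hgi' : Integrable (fun x => g (-x)) := by
    have := (MeasurePreserving.integrableOn_comp_preimage
      (Measure.measurePreserving_neg (volume : Measure ℝ))
      (Homeomorph.neg ℝ).measurableEmbedding).2 (hgi.integrableOn (s := univ))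
    simpa [IntegrableOn, Function.comp_def] using this
  refine kdv_limit_zero_atTop hb (fun x => hg0 (-x)) hgi' (fun x => by simpa using hu (-x)) ?_
  exact h.comp tendsto_neg_atTop_atBot


private lemma kdv_deriv_facts {f : ℝ → ℝ} (hf : ContDiff ℝ 3 f) :
    (∀ x, HasDerivAt f (deriv f x) x) ∧
    (∀ x, HasDerivAt (deriv f) (iteratedDeriv 2 f x) x) ∧
    (∀ x, HasDerivAt (iteratedDeriv 2 f) (iteratedDeriv 3 f x) x) ∧
    Continuous (deriv f) ∧ Continuous (iteratedDeriv 2 f) := by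
  have hd1 : ContDiff ℝ 2 (deriv f) := by
    have h := (contDiff_succ_iff_deriv (n := 2) (f := f)).mp (by norm_num at hf ⊢; exact hf)
    exact h.2.2
  have hd2 : ContDiff ℝ 1 (deriv (deriv f)) := by
    have h := (contDiff_succ_iff_deriv (n := 1) (f := deriv f)).mp (by norm_num at hd1 ⊢; exact hd1)
    exact h.2.2
  have e2 : iteratedDeriv 2 f = deriv (deriv f) := by
    rw [iteratedDeriv_succ, iteratedDeriv_one]
  have e3 : iteratedDeriv 3 f = deriv (iteratedDeriv 2 f) := by
    rw [iteratedDeriv_succ]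
  refine ⟨fun x => (hf.differentiable (by norm_num) x).hasDerivAt,
    fun x => ?_, fun x => ?_, ?_, ?_⟩
  · rw [e2]; exact ((hd1.differentiable (by norm_num)) x).hasDerivAt
  · rw [e3, e2]; exact ((hd2.differentiable (by norm_num)) x).hasDerivAt
  · exact hd1.continuous
  · rw [e2]; exact hd2.continuous

private lemma kdv_key_estimate {f g u w : ℝ → ℝ} {M : ℝ} (hM0 : 0 ≤ M)
    (hfuw : ∀ x, f x = u x - w x)
    (hu : ContDiff ℝ 3 u) (hw : ContDiff ℝ 3 w)
    (hg : ∀ x, g x = -(u x * deriv u x - w x * deriv w x)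
      - (1 / 12) * iteratedDeriv 3 f x)
    (hM : ∀ x, |deriv u x| ≤ M)
    (hl0t : Tendsto f atTop (𝓝 0)) (hl0b : Tendsto f atBot (𝓝 0))
    (hl1t : Tendsto (fun x => deriv f x) atTop (𝓝 0))
    (hl1b : Tendsto (fun x => deriv f x) atBot (𝓝 0))
    (hl2t : Tendsto (fun x => f x * iteratedDeriv 2 f x) atTop (𝓝 0))
    (hl2b : Tendsto (fun x => f x * iteratedDeriv 2 f x) atBot (𝓝 0))
    (hL2 : Integrable (fun x => f x ^ 2))
    (hA : Integrable (fun x => f x * g x))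
    (hB : Integrable (fun x => f x * iteratedDeriv 3 f x))
    (hC : Integrable (fun x => f x ^ 2 * deriv f x)) :
    |∫ x, 2 * f x * g x| ≤ M * ∫ x, f x ^ 2 := by
  have hfeq : f = fun x => u x - w x := funext hfuw
  have hf : ContDiff ℝ 3 f := by rw [hfeq]; exact hu.sub hw
  obtain ⟨hf1, hf2, hf3, hf1c, hf2c⟩ := kdv_deriv_facts hf
  obtain ⟨hu1, -, -, hu1c, -⟩ := kdv_deriv_facts hu
  obtain ⟨hw1, -, -, hw1c, -⟩ := kdv_deriv_facts hw
  have hfc : Continuous f := hf.continuous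
  have hder : ∀ x, deriv f x = deriv u x - deriv w x := by
    intro x
    rw [hfeq]
    exact deriv_sub (hu.differentiable (by norm_num) x) (hw.differentiable (by norm_num) x)
  -- define H and H'
  set H : ℝ → ℝ := fun x => w x * f x ^ 2 + f x ^ 3 / 3
      + (1 / 6) * (f x * iteratedDeriv 2 f x) - (1 / 12) * (deriv f x) ^ 2 with hH
  set P : ℝ → ℝ := fun x => f x ^ 2 * deriv u x with hPdef
  set H' : ℝ → ℝ := fun x => -(2 * (f x * g x)) - P x with hH'
  have hHderiv : ∀ x, HasDerivAt H (H' x) x := by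
    intro x
    have D : HasDerivAt H
        (deriv w x * f x ^ 2 + w x * (2 * f x ^ 1 * deriv f x)
          + (3 : ℕ) * f x ^ 2 * deriv f x / 3
          + (1 / 6) * (deriv f x * iteratedDeriv 2 f x + f x * iteratedDeriv 3 f x)
          - (1 / 12) * ((2 : ℕ) * deriv f x ^ 1 * iteratedDeriv 2 f x)) x := by
      exact ((((hw1 x).mul ((hf1 x).pow 2)).add (((hf1 x).pow 3).div_const 3)).add
        (((hf1 x).mul (hf3 x)).const_mul (1 / 6))).sub (((hf2 x).pow 2).const_mul (1 / 12))
    convert D using 1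
    rw [hH', hPdef]
    simp only [hg x, hder x, hfuw x]
    push_cast
    ring
  have hPint : Integrable P := by
    apply Integrable.mono' (hL2.const_mul M) ((hfc.pow 2).mul hu1c).aestronglyMeasurable
    refine ae_of_all _ fun x => ?_
    rw [Real.norm_eq_abs, Pi.mul_apply, Pi.pow_apply, abs_mul, abs_pow, sq_abs]
    nlinarith [hM x, sq_nonneg (f x), abs_nonneg (deriv u x)]
  have hH'int : Integrable H' := ((hA.const_mul 2).neg).sub hPint
  -- limits of H at ±∞
  have htop : Tendsto H atTop (𝓝 (limUnder atTop H)) :=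
    tendsto_limUnder_of_hasDerivAt_of_integrableOn_Ioi (a := 0)
      (fun x _ => hHderiv x) hH'int.integrableOn
  have hbot : Tendsto H atBot (𝓝 (limUnder atBot H)) :=
    tendsto_limUnder_of_hasDerivAt_of_integrableOn_Iic (a := 0)
      (fun x _ => hHderiv x) hH'int.integrableOn
  -- the lower-order part of H tends to 0
  have hrest_top : Tendsto (fun x => f x ^ 3 / 3 + (1 / 6) * (f x * iteratedDeriv 2 f x)
      - (1 / 12) * (deriv f x) ^ 2) atTop (𝓝 0) := by
    have h1 : Tendsto (fun x => f x ^ 3 / 3) atTop (𝓝 0) := by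
      have := ((hl0t.mul hl0t).mul hl0t).div_const 3
      simpa [pow_succ, pow_zero, mul_assoc] using this
    have h2 : Tendsto (fun x => (1 / 6 : ℝ) * (f x * iteratedDeriv 2 f x)) atTop (𝓝 0) := by
      simpa using hl2t.const_mul (1 / 6 : ℝ)
    have h3 : Tendsto (fun x => (1 / 12 : ℝ) * (deriv f x) ^ 2) atTop (𝓝 0) := by
      have := (hl1t.mul hl1t).const_mul (1 / 12 : ℝ)
      simpa [sq] using this
    simpa using (h1.add h2).sub h3
  have hrest_bot : Tendsto (fun x => f x ^ 3 / 3 + (1 / 6) * (f x * iteratedDeriv 2 f x)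
      - (1 / 12) * (deriv f x) ^ 2) atBot (𝓝 0) := by
    have h1 : Tendsto (fun x => f x ^ 3 / 3) atBot (𝓝 0) := by
      have := ((hl0b.mul hl0b).mul hl0b).div_const 3
      simpa [pow_succ, pow_zero, mul_assoc] using this
    have h2 : Tendsto (fun x => (1 / 6 : ℝ) * (f x * iteratedDeriv 2 f x)) atBot (𝓝 0) := by
      simpa using hl2b.const_mul (1 / 6 : ℝ)
    have h3 : Tendsto (fun x => (1 / 12 : ℝ) * (deriv f x) ^ 2) atBot (𝓝 0) := by
      have := (hl1b.mul hl1b).const_mul (1 / 12 : ℝ)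
      simpa [sq] using this
    simpa using (h1.add h2).sub h3
  -- u * f^2 tends to the same limits
  have huf2_top : Tendsto (fun x => u x * f x ^ 2) atTop (𝓝 (limUnder atTop H)) := by
    have hwf2 : Tendsto (fun x => w x * f x ^ 2) atTop (𝓝 (limUnder atTop H)) := by
      have := htop.sub hrest_top
      rw [sub_zero] at this
      refine this.congr fun x => ?_
      rw [hH]; ring
    have hf3' : Tendsto (fun x => f x ^ 3) atTop (𝓝 0) := by
      have := (hl0t.mul hl0t).mul hl0t
      simpa [pow_succ, pow_zero, mul_assoc] using this
    have := hwf2.add hf3'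
    rw [add_zero] at this
    refine this.congr fun x => ?_
    rw [hfuw x]; ring
  have huf2_bot : Tendsto (fun x => u x * f x ^ 2) atBot (𝓝 (limUnder atBot H)) := by
    have hwf2 : Tendsto (fun x => w x * f x ^ 2) atBot (𝓝 (limUnder atBot H)) := by
      have := hbot.sub hrest_bot
      rw [sub_zero] at this
      refine this.congr fun x => ?_
      rw [hH]; ring
    have hf3' : Tendsto (fun x => f x ^ 3) atBot (𝓝 0) := by
      have := (hl0b.mul hl0b).mul hl0b
      simpa [pow_succ, pow_zero, mul_assoc] using this
    have := hwf2.add hf3'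
    rw [add_zero] at this
    refine this.congr fun x => ?_
    rw [hfuw x]; ring
  -- linear growth of u
  set b : ℝ := |u 0| + M + 1 with hb
  have hbpos : 0 < b := by positivity
  have hugrowth : ∀ x, |u x| ≤ b * (1 + |x|) := by
    intro x
    have := convex_univ.norm_image_sub_le_of_norm_deriv_le (s := (univ : Set ℝ))
      (fun y _ => hu.differentiable (by norm_num) y) (fun y _ => hM y)
      (mem_univ 0) (mem_univ x)
    simp only [Real.norm_eq_abs, sub_zero] at this
    have h0 : |u x| ≤ |u 0| + M * |x| := by
      calc |u x| = |u x - u 0 + u 0| := by ring_nf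
        _ ≤ |u x - u 0| + |u 0| := abs_add_le _ _
        _ ≤ M * |x| + |u 0| := by linarith
        _ = |u 0| + M * |x| := by ring
    nlinarith [abs_nonneg x, abs_nonneg (u 0)]
  -- limits are zero
  have hLtop : limUnder atTop H = 0 :=
    kdv_limit_zero_atTop hbpos (fun x => sq_nonneg (f x)) hL2 hugrowth huf2_top
  have hLbot : limUnder atBot H = 0 :=
    kdv_limit_zero_atBot hbpos (fun x => sq_nonneg (f x)) hL2 hugrowth huf2_bot
  -- integral of H' is zero
  have hintH' : ∫ x, H' x = 0 := by
    have := integral_of_hasDerivAt_of_tendsto hHderiv hH'int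
      (hLbot ▸ hbot) (hLtop ▸ htop)
    simpa using this
  -- conclude
  have hsplit : ∫ x, 2 * f x * g x = ∫ x, (-(H' x) - P x) := by
    apply integral_congr_ae
    refine ae_of_all _ fun x => ?_
    simp only [hH', hPdef]
    ring
  have hnegint : Integrable (fun x => -(H' x)) := hH'int.neg
  rw [hsplit, integral_sub hnegint hPint, integral_neg, hintH', neg_zero, zero_sub, abs_neg]
  calc |∫ x, P x| ≤ ∫ x, M * f x ^ 2 := by
        rw [← Real.norm_eq_abs]
        apply norm_integral_le_of_norm_le (hL2.const_mul M)
        refine ae_of_all _ fun x => ?_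
        rw [Real.norm_eq_abs, abs_mul, abs_pow, sq_abs]
        nlinarith [hM x, sq_nonneg (f x), abs_nonneg (deriv u x)]
    _ = M * ∫ x, f x ^ 2 := integral_const_mul M _


/-- Uniqueness of the Cauchy problem for the KdV equation
`v_t + v v_x + (1/12) v_xxx = 0` (Lemma 6.6). -/
theorem kdv_cauchy_uniqueness
    (t0 : ℝ) (v1 v2 ω : ℝ → ℝ → ℝ)
    (hω : ∀ x t : ℝ, ω x t = v1 x t - v2 x t)
    (hx1 : ∀ t ≥ t0, ContDiff ℝ 3 (fun x => v1 x t))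
    (hx2 : ∀ t ≥ t0, ContDiff ℝ 3 (fun x => v2 x t))
    (ht1 : ∀ x : ℝ, DifferentiableOn ℝ (fun t => v1 x t) (Ici t0))
    (ht2 : ∀ x : ℝ, DifferentiableOn ℝ (fun t => v2 x t) (Ici t0))
    (hkdv1 : ∀ x : ℝ, ∀ t ≥ t0,
      derivWithin (fun s => v1 x s) (Ici t0) t
        + v1 x t * deriv (fun y => v1 y t) x
        + (1 / 12) * iteratedDeriv 3 (fun y => v1 y t) x = 0)
    (hkdv2 : ∀ x : ℝ, ∀ t ≥ t0,
      derivWithin (fun s => v2 x s) (Ici t0) t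
        + v2 x t * deriv (fun y => v2 y t) x
        + (1 / 12) * iteratedDeriv 3 (fun y => v2 y t) x = 0)
    (hinit : ∀ x : ℝ, v1 x t0 = v2 x t0)
    (hlim0 : ∀ t ≥ t0, Tendsto (fun x => ω x t) atTop (nhds 0) ∧
      Tendsto (fun x => ω x t) atBot (nhds 0))
    (hlim1 : ∀ t ≥ t0, Tendsto (fun x => deriv (fun y => ω y t) x) atTop (nhds 0) ∧
      Tendsto (fun x => deriv (fun y => ω y t) x) atBot (nhds 0))
    (hlim2 : ∀ t ≥ t0,
      Tendsto (fun x => ω x t * iteratedDeriv 2 (fun y => ω y t) x) atTop (nhds 0) ∧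
      Tendsto (fun x => ω x t * iteratedDeriv 2 (fun y => ω y t) x) atBot (nhds 0))
    (hL2 : ∀ t ≥ t0, Integrable (fun x => (ω x t) ^ 2))
    (hbdd : ∀ T > t0, ∃ M : ℝ, ∀ t ∈ Icc t0 T, ∀ x : ℝ,
      |deriv (fun y => v1 y t) x| ≤ M)
    (hq : ∀ t ≥ t0, HasDerivWithinAt (fun s => ∫ x : ℝ, (ω x s) ^ 2)
      (∫ x : ℝ, 2 * ω x t * derivWithin (fun s => ω x s) (Ici t0) t) (Ici t0) t)
    (hint1 : ∀ t ≥ t0,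
      Integrable (fun x => ω x t * derivWithin (fun s => ω x s) (Ici t0) t))
    (hint2 : ∀ t ≥ t0,
      Integrable (fun x => ω x t * iteratedDeriv 3 (fun y => ω y t) x))
    (hint3 : ∀ t ≥ t0,
      Integrable (fun x => (ω x t) ^ 2 * deriv (fun y => ω y t) x)) :
    ∀ x : ℝ, ∀ t ≥ t0, v1 x t = v2 x t := by
  -- the L² norm q
  set q : ℝ → ℝ := fun s => ∫ x : ℝ, (ω x s) ^ 2 with hqdef
  -- q vanishes identically
  have hqzero : ∀ t ≥ t0, q t = 0 := by
    intro t1 ht1'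
    set T : ℝ := t1 + 1 with hT
    have hTgt : t0 < T := by linarith
    obtain ⟨M, hM⟩ := hbdd T hTgt
    have hM0 : 0 ≤ M := le_trans (abs_nonneg _) (hM t0 ⟨le_refl _, hTgt.le⟩ 0)
    -- the key estimate at each time s ∈ [t0, T)
    have hkey : ∀ s ∈ Ico t0 T,
        |∫ x : ℝ, 2 * ω x s * derivWithin (fun r => ω x r) (Ici t0) s|
          ≤ M * ∫ x : ℝ, (ω x s) ^ 2 := by
      intro s hs
      have hs0 : t0 ≤ s := hs.1
      have hsIcc : s ∈ Icc t0 T := ⟨hs.1, hs.2.le⟩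
      -- identify the time derivative of ω
      have hgid : ∀ x : ℝ, derivWithin (fun r => ω x r) (Ici t0) s =
          -((fun y => v1 y s) x * deriv (fun y => v1 y s) x
            - (fun y => v2 y s) x * deriv (fun y => v2 y s) x)
          - (1 / 12) * iteratedDeriv 3 (fun y => ω y s) x := by
        intro x
        have e0 : (fun r => ω x r) = fun r => v1 x r - v2 x r := funext fun r => hω x r
        have e1 : derivWithin (fun r => ω x r) (Ici t0) s
            = derivWithin (fun r => v1 x r) (Ici t0) s
              - derivWithin (fun r => v2 x r) (Ici t0) s := by
          rw [e0]
          exact derivWithin_sub (ht1 x s hs0) (ht2 x s hs0)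
        have e3 : iteratedDeriv 3 (fun y => ω y s) x
            = iteratedDeriv 3 (fun y => v1 y s) x - iteratedDeriv 3 (fun y => v2 y s) x := by
          have e0' : (fun y => ω y s) = (fun y => v1 y s) - (fun y => v2 y s) := by
            funext y; exact hω y s
          rw [e0', ← iteratedDerivWithin_univ, ← iteratedDerivWithin_univ,
            ← iteratedDerivWithin_univ,
            iteratedDerivWithin_sub (mem_univ x) uniqueDiffOn_univ
              (hx1 s hs0).contDiffWithinAt (hx2 s hs0).contDiffWithinAt]
        have k1 := hkdv1 x s hs0
        have k2 := hkdv2 x s hs0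
        rw [e1, e3]
        simp only
        linarith
      exact kdv_key_estimate (f := fun x => ω x s)
        (g := fun x => derivWithin (fun r => ω x r) (Ici t0) s)
        (u := fun x => v1 x s) (w := fun x => v2 x s) hM0
        (fun x => hω x s) (hx1 s hs0) (hx2 s hs0) hgid (fun x => hM s hsIcc x)
        (hlim0 s hs0).1 (hlim0 s hs0).2 (hlim1 s hs0).1 (hlim1 s hs0).2
        (hlim2 s hs0).1 (hlim2 s hs0).2 (hL2 s hs0) (hint1 s hs0)
        (hint2 s hs0) (hint3 s hs0)
    -- Grönwall
    have hcont : ContinuousOn q (Icc t0 T) := by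
      intro s hs
      exact ((hq s hs.1).continuousWithinAt).mono (Icc_subset_Ici_self)
    have hderiv : ∀ s ∈ Ico t0 T, HasDerivWithinAt q
        (∫ x : ℝ, 2 * ω x s * derivWithin (fun r => ω x r) (Ici t0) s) (Ici s) s := by
      intro s hs
      exact (hq s hs.1).mono (Ici_subset_Ici.mpr hs.1)
    have hq0 : ‖q t0‖ ≤ 0 := by
      have : q t0 = 0 := by
        rw [hqdef]
        simp only [hω, hinit, sub_self]
        simp
      rw [this, norm_zero]
    have hbound : ∀ s ∈ Ico t0 T,
        ‖∫ x : ℝ, 2 * ω x s * derivWithin (fun r => ω x r) (Ici t0) s‖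
          ≤ M * ‖q s‖ + 0 := by
      intro s hs
      have h1 := hkey s hs
      have h2 : q s = ‖q s‖ := by
        rw [Real.norm_eq_abs, abs_of_nonneg]
        exact integral_nonneg fun x => sq_nonneg _
      rw [Real.norm_eq_abs, add_zero, ← h2]
      exact h1
    have hgron := norm_le_gronwallBound_of_norm_deriv_right_le hcont hderiv hq0 hbound
    have ht1Icc : t1 ∈ Icc t0 T := ⟨ht1', by linarith⟩
    have := hgron t1 ht1Icc
    rw [gronwallBound_ε0] at this
    simp only [zero_mul] at this
    have hqnn : 0 ≤ q t1 := integral_nonneg fun x => sq_nonneg _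
    rw [Real.norm_eq_abs, abs_of_nonneg hqnn] at this
    linarith
  -- conclude pointwise vanishing
  intro x t ht
  have hqt := hqzero t ht
  by_contra hne
  have hωx : ω x t ≠ 0 := by
    rw [hω]
    exact sub_ne_zero_of_ne hne
  have hcont : Continuous (fun y => ω y t) := by
    have : (fun y => ω y t) = fun y => v1 y t - v2 y t := funext fun y => hω y t
    rw [this]
    exact ((hx1 t ht).continuous).sub ((hx2 t ht).continuous)
  have hgcont : Continuous (fun y => (ω y t) ^ 2) := hcont.pow 2
  have hpos : 0 < ∫ y : ℝ, (ω y t) ^ 2 := by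
    rw [integral_pos_iff_support_of_nonneg (fun y => sq_nonneg _) (hL2 t ht)]
    have hopen : IsOpen (Function.support fun y => (ω y t) ^ 2) := by
      rw [Function.support]
      exact isOpen_ne.preimage hgcont
    refine hopen.measure_pos volume ⟨x, ?_⟩
    simp only [Function.mem_support]
    exact pow_ne_zero 2 hωx
  rw [hqdef] at hqt
  simp only at hqt
  linarith
end

section
/- (Proposition 6.5 of the paper: vanishing of an entire function with one-sided super-exponential bound.) Let c7 > 0 and c5, c3, c1 ∈ ℝ, and define θ(μ) = c7 μ^{7/2} + c5 μ^{5/2} + c3 μ^{3/2} + c1 μ^{1/2} for μ ∈ ℂ ∖ (−∞,0], using principal branches of the half-integer powers. If f : ℂ → ℂ is entire and there exist constants C > 0 and R ≥ 1 such that |f(μ)| ≤ C |μ|^{−3/4} exp(Re θ(μ)) for every μ ∉ (−∞,0] with |μ| ≥ R, then f is identically zero. -/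
open Complex Set Filter Asymptotics Bornology Topology

/-- compatibility: the complex absolute value as an `AbsoluteValue`. -/
noncomputable def Complex.abs : AbsoluteValue ℂ ℝ := NormedField.toAbsoluteValue ℂ

lemma Complex.abs_def (z : ℂ) : Complex.abs z = ‖z‖ := rfl

lemma Complex.abs_ofReal (r : ℝ) : Complex.abs (r : ℂ) = |r| := by
  rw [Complex.abs_def, Complex.norm_real, Real.norm_eq_abs]

lemma Complex.abs_apply (z : ℂ) : Complex.abs z = Real.sqrt (Complex.normSq z) := by
  rw [Complex.abs_def, Complex.norm_def]

lemma Complex.continuous_abs : Continuous fun z : ℂ => Complex.abs z := continuous_norm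

lemma Complex.norm_eq_abs (z : ℂ) : ‖z‖ = Complex.abs z := rfl

namespace Prop65

/-- polar real part -/
lemma polar_re (r ψ : ℝ) : ((r : ℂ) * Complex.exp ((ψ : ℂ) * I)).re = r * Real.cos ψ := by
  rw [Complex.re_ofReal_mul, Complex.exp_ofReal_mul_I_re]

lemma polar_abs {r : ℝ} (hr : 0 ≤ r) (ψ : ℝ) :
    Complex.abs ((r : ℂ) * Complex.exp ((ψ : ℂ) * I)) = r := by
  rw [map_mul, Complex.abs_def (Complex.exp _), Complex.norm_exp]
  simp [Complex.abs_ofReal, _root_.abs_of_nonneg hr]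

lemma polar_pow (r ψ : ℝ) (n : ℕ) :
    ((r : ℂ) * Complex.exp ((ψ : ℂ) * I)) ^ n
      = ((r ^ n : ℝ) : ℂ) * Complex.exp (((n * ψ : ℝ) : ℂ) * I) := by
  rw [mul_pow, ← Complex.exp_nat_mul]
  push_cast
  ring_nf

lemma polar_mul (a r ψ : ℝ) :
    Complex.exp ((a : ℂ) * I) * ((r : ℂ) * Complex.exp ((ψ : ℂ) * I))
      = (r : ℂ) * Complex.exp (((ψ + a : ℝ) : ℂ) * I) := by
  rw [mul_comm (Complex.exp ((a : ℂ) * I)), mul_assoc, ← Complex.exp_add]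
  push_cast
  ring_nf

/-- the rotation by `π/7` -/
noncomputable def zt : ℂ := Complex.exp ((↑(Real.pi / 7) : ℂ) * I)

lemma zt_pow_mul (k : ℕ) (r ψ : ℝ) :
    zt ^ k * ((r : ℂ) * Complex.exp ((ψ : ℂ) * I))
      = (r : ℂ) * Complex.exp (((ψ + k * Real.pi / 7 : ℝ) : ℂ) * I) := by
  rw [zt, ← Complex.exp_nat_mul]
  rw [show ((k : ℂ) * ((↑(Real.pi / 7) : ℂ) * I)) = ((k * Real.pi / 7 : ℝ) : ℂ) * I by
    push_cast; ring]
  rw [polar_mul]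

/-- the phase polynomial -/
noncomputable def Pf (c7 c5 c3 c1 : ℝ) (z : ℂ) : ℂ :=
  (c7 : ℂ) * z ^ 7 + (c5 : ℂ) * z ^ 5 + (c3 : ℂ) * z ^ 3 + (c1 : ℂ) * z

lemma Pf_neg (c7 c5 c3 c1 : ℝ) (z : ℂ) : Pf c7 c5 c3 c1 (-z) = - Pf c7 c5 c3 c1 z := by
  simp [Pf]; ring

lemma Pf_re_polar (c7 c5 c3 c1 r ψ : ℝ) :
    (Pf c7 c5 c3 c1 ((r : ℂ) * Complex.exp ((ψ : ℂ) * I))).re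
      = c7 * r ^ 7 * Real.cos (7 * ψ) + c5 * r ^ 5 * Real.cos (5 * ψ)
        + c3 * r ^ 3 * Real.cos (3 * ψ) + c1 * r * Real.cos ψ := by
  have h : ∀ (c : ℝ) (n : ℕ), ((c : ℂ) * ((r : ℂ) * Complex.exp ((ψ : ℂ) * I)) ^ n).re
      = c * r ^ n * Real.cos (n * ψ) := by
    intro c n
    rw [polar_pow, show ((c : ℂ) * (((r ^ n : ℝ) : ℂ) * Complex.exp (((n * ψ : ℝ) : ℂ) * I)))
        = ((c * r ^ n : ℝ) : ℂ) * Complex.exp (((n * ψ : ℝ) : ℂ) * I) by push_cast; ring,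
      polar_re]
  have h7 := h c7 7; have h5 := h c5 5; have h3 := h c3 3
  have h1 : ((c1 : ℂ) * ((r : ℂ) * Complex.exp ((ψ : ℂ) * I))).re = c1 * r * Real.cos ψ := by
    rw [show ((c1 : ℂ) * ((r : ℂ) * Complex.exp ((ψ : ℂ) * I)))
        = ((c1 * r : ℝ) : ℂ) * Complex.exp ((ψ : ℂ) * I) by push_cast; ring, polar_re]
    try ring
  simp only [Pf, Complex.add_re, h7, h5, h3, h1]
  push_cast
  try ring

/-- principal branch: `(z²)^(n/2) = zⁿ` on the open right half-plane. -/
lemma sq_cpow_half {z : ℂ} (hz : 0 < z.re) (n : ℕ) : (z ^ 2) ^ ((n : ℂ) / 2) = z ^ n := by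
  have hz0 : z ≠ 0 := fun h => by simp [h] at hz
  have harg : |z.arg| < Real.pi / 2 := Complex.abs_arg_lt_pi_div_two_iff.2 (Or.inl hz)
  have hlog : Complex.log (z ^ 2) = 2 * Complex.log z := by
    rw [sq, Complex.log_mul hz0 hz0]
    · ring
    · constructor
      · have := abs_lt.1 harg
        nlinarith [Real.pi_pos]
      · have := abs_lt.1 harg
        nlinarith [Real.pi_pos]
  rw [Complex.cpow_def_of_ne_zero (pow_ne_zero _ hz0), hlog]
  rw [show (2 * Complex.log z * ((n : ℂ) / 2)) = (n : ℂ) * Complex.log z by ring]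
  rw [Complex.exp_nat_mul, Complex.exp_log hz0]


lemma off_cut {z : ℂ} (hz : 0 < z.re) : z ^ 2 ∉ (fun r : ℝ => (r : ℂ)) '' Iic 0 := by
  rintro ⟨x, hx, hxe⟩
  have him : (z ^ 2).im = 0 := by rw [← hxe]; simp
  have him2 : (z ^ 2).im = 2 * z.re * z.im := by
    simp [sq, Complex.mul_im]; try ring
  have h2 : z.im = 0 := by
    rw [him2] at him; rcases mul_eq_zero.1 him with h | h
    · nlinarith
    · exact h
  have hre : (z ^ 2).re = z.re ^ 2 := by
    simp [sq, Complex.mul_re, h2]; try ring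
  have hx2 : (z ^ 2).re = x := by rw [← hxe]; simp
  have : x ≤ 0 := hx
  nlinarith

section Bounds

variable {c7 c5 c3 c1 C R : ℝ} {f : ℂ → ℂ}

lemma bdd_open (hR : 1 ≤ R)
    (hbound : ∀ μ : ℂ, μ ∉ (fun r : ℝ => (r : ℂ)) '' Iic 0 → R ≤ Complex.abs μ →
      Complex.abs (f μ) ≤ C * (Complex.abs μ) ^ (-(3 / 4) : ℝ) *
        Real.exp (((c7 : ℂ) * μ ^ ((7 : ℂ) / 2) + (c5 : ℂ) * μ ^ ((5 : ℂ) / 2)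
          + (c3 : ℂ) * μ ^ ((3 : ℂ) / 2) + (c1 : ℂ) * μ ^ ((1 : ℂ) / 2)).re))
    (hC : 0 < C) :
    ∀ z : ℂ, 0 < z.re → Real.sqrt R ≤ Complex.abs z →
      Complex.abs (f (z ^ 2)) ≤ C * Real.exp ((Pf c7 c5 c3 c1 z).re) := by
  intro z hz hzr
  have hz1 : 1 ≤ Complex.abs z := by
    refine le_trans ?_ hzr
    rw [show (1 : ℝ) = Real.sqrt 1 by simp]
    exact Real.sqrt_le_sqrt hR
  have habs : Complex.abs (z ^ 2) = (Complex.abs z) ^ 2 := by simp [map_pow]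
  have hRa : R ≤ Complex.abs (z ^ 2) := by
    rw [habs]
    have h0 : (0 : ℝ) ≤ R := le_trans zero_le_one hR
    calc R = Real.sqrt R ^ 2 := (Real.sq_sqrt h0).symm
    _ ≤ (Complex.abs z) ^ 2 := by
        apply pow_le_pow_left₀ (Real.sqrt_nonneg R) hzr
  have h := hbound (z ^ 2) (off_cut hz) hRa
  have e7 : (z ^ 2) ^ ((7 : ℂ) / 2) = z ^ 7 := by
    have := sq_cpow_half hz 7; push_cast at this; exact this
  have e5 : (z ^ 2) ^ ((5 : ℂ) / 2) = z ^ 5 := by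
    have := sq_cpow_half hz 5; push_cast at this; exact this
  have e3 : (z ^ 2) ^ ((3 : ℂ) / 2) = z ^ 3 := by
    have := sq_cpow_half hz 3; push_cast at this; exact this
  have e1 : (z ^ 2) ^ ((1 : ℂ) / 2) = z ^ 1 := by
    have := sq_cpow_half hz 1; push_cast at this; exact this
  rw [e7, e5, e3, e1] at h
  have hrp : (Complex.abs (z ^ 2)) ^ (-(3 / 4) : ℝ) ≤ 1 := by
    apply Real.rpow_le_one_of_one_le_of_nonpos
    · exact le_trans hR hRa
    · norm_num
  calc Complex.abs (f (z ^ 2))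
      ≤ C * (Complex.abs (z ^ 2)) ^ (-(3 / 4) : ℝ) *
        Real.exp (((c7 : ℂ) * z ^ 7 + (c5 : ℂ) * z ^ 5 + (c3 : ℂ) * z ^ 3
          + (c1 : ℂ) * z ^ 1).re) := h
    _ ≤ C * 1 * Real.exp (((c7 : ℂ) * z ^ 7 + (c5 : ℂ) * z ^ 5 + (c3 : ℂ) * z ^ 3
          + (c1 : ℂ) * z ^ 1).re) := by
        apply mul_le_mul_of_nonneg_right _ (Real.exp_pos _).le
        exact mul_le_mul_of_nonneg_left hrp hC.le
    _ = C * Real.exp ((Pf c7 c5 c3 c1 z).re) := by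
        rw [mul_one]; congr 2
        simp [Pf]

lemma bdd_closed (hR : 1 ≤ R)
    (hbound : ∀ μ : ℂ, μ ∉ (fun r : ℝ => (r : ℂ)) '' Iic 0 → R ≤ Complex.abs μ →
      Complex.abs (f μ) ≤ C * (Complex.abs μ) ^ (-(3 / 4) : ℝ) *
        Real.exp (((c7 : ℂ) * μ ^ ((7 : ℂ) / 2) + (c5 : ℂ) * μ ^ ((5 : ℂ) / 2)
          + (c3 : ℂ) * μ ^ ((3 : ℂ) / 2) + (c1 : ℂ) * μ ^ ((1 : ℂ) / 2)).re))
    (hC : 0 < C) (hf : Continuous f) :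
    ∀ z : ℂ, 0 ≤ z.re → Real.sqrt R ≤ Complex.abs z →
      Complex.abs (f (z ^ 2)) ≤ C * Real.exp ((Pf c7 c5 c3 c1 z).re) := by
  intro z hz hzr
  set u : ℕ → ℂ := fun n => z + ((1 / (n + 1) : ℝ) : ℂ) with hu
  have htend : Tendsto u atTop (𝓝 z) := by
    have h1 : Tendsto (fun n : ℕ => ((1 / (n + 1) : ℝ) : ℂ)) atTop (𝓝 (((0 : ℝ) : ℂ))) :=
      (Complex.continuous_ofReal.tendsto 0).comp tendsto_one_div_add_atTop_nhds_zero_nat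
    simpa [hu] using tendsto_const_nhds.add h1
  have hpos : ∀ n : ℕ, (0 : ℝ) < 1 / (n + 1) := by
    intro n; positivity
  have hre : ∀ n, 0 < (u n).re := by
    intro n
    simp only [hu, Complex.add_re, Complex.ofReal_re]
    have := hpos n; linarith
  have habs : ∀ n, Real.sqrt R ≤ Complex.abs (u n) := by
    intro n
    refine le_trans hzr ?_
    rw [Complex.abs_apply, Complex.abs_apply]
    apply Real.sqrt_le_sqrt
    simp only [hu, Complex.normSq_apply, Complex.add_re, Complex.add_im, Complex.ofReal_re,
      Complex.ofReal_im, add_zero]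
    have := hpos n
    nlinarith
  have hb : ∀ n, Complex.abs (f ((u n) ^ 2)) ≤ C * Real.exp ((Pf c7 c5 c3 c1 (u n)).re) :=
    fun n => bdd_open hR hbound hC (u n) (hre n) (habs n)
  have hPcont : Continuous fun w : ℂ => C * Real.exp ((Pf c7 c5 c3 c1 w).re) := by
    apply continuous_const.mul
    apply Real.continuous_exp.comp
    apply Complex.continuous_re.comp
    unfold Pf
    fun_prop
  have hLcont : Continuous fun w : ℂ => Complex.abs (f (w ^ 2)) :=
    Complex.continuous_abs.comp (hf.comp (continuous_pow 2))
  exact le_of_tendsto_of_tendsto' ((hLcont.tendsto z).comp htend)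
    ((hPcont.tendsto z).comp htend) hb

lemma bdd_closed_neg (hR : 1 ≤ R)
    (hbound : ∀ μ : ℂ, μ ∉ (fun r : ℝ => (r : ℂ)) '' Iic 0 → R ≤ Complex.abs μ →
      Complex.abs (f μ) ≤ C * (Complex.abs μ) ^ (-(3 / 4) : ℝ) *
        Real.exp (((c7 : ℂ) * μ ^ ((7 : ℂ) / 2) + (c5 : ℂ) * μ ^ ((5 : ℂ) / 2)
          + (c3 : ℂ) * μ ^ ((3 : ℂ) / 2) + (c1 : ℂ) * μ ^ ((1 : ℂ) / 2)).re))
    (hC : 0 < C) (hf : Continuous f) :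
    ∀ z : ℂ, z.re ≤ 0 → Real.sqrt R ≤ Complex.abs z →
      Complex.abs (f (z ^ 2)) ≤ C * Real.exp (-(Pf c7 c5 c3 c1 z).re) := by
  intro z hz hzr
  have h := bdd_closed hR hbound hC hf (-z) (by simpa using hz) (by simpa using hzr)
  rw [show (-z) ^ 2 = z ^ 2 by ring, Pf_neg] at h
  simpa using h

end Bounds

lemma cos_add_k_pi (x : ℝ) (k : ℕ) : Real.cos (x + k * Real.pi) = (-1:ℝ)^k * Real.cos x := by
  induction k with
  | zero => simp
  | succ n ih =>
    rw [show x + ((n:ℕ)+1 : ℕ) * Real.pi = (x + n * Real.pi) + Real.pi by push_cast; ring,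
      Real.cos_add_pi, ih]
    ring

/-- the 14-fold rotated product -/
noncomputable def Hf (f : ℂ → ℂ) (z : ℂ) : ℂ := ∏ k ∈ Finset.range 14, f ((zt ^ k * z) ^ 2)

lemma sector_bound {c7 E C rm : ℝ} {f : ℂ → ℂ} (hC : 0 < C)
    (hfb1 : ∀ r ψ : ℝ, rm ≤ r → 0 ≤ Real.cos ψ →
      Complex.abs (f (((r:ℂ) * Complex.exp ((ψ:ℂ) * I)) ^ 2))
        ≤ C * Real.exp (c7 * r^7 * Real.cos (7*ψ) + E * r^5))
    (hfb2 : ∀ r ψ : ℝ, rm ≤ r → Real.cos ψ ≤ 0 →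
      Complex.abs (f (((r:ℂ) * Complex.exp ((ψ:ℂ) * I)) ^ 2))
        ≤ C * Real.exp (-(c7 * r^7 * Real.cos (7*ψ)) + E * r^5)) :
    ∀ r ψ : ℝ, rm ≤ r → 0 ≤ ψ → ψ ≤ Real.pi/7 →
      Complex.abs (Hf f ((r:ℂ) * Complex.exp ((ψ:ℂ) * I)))
        ≤ C^14 * Real.exp (-(2*c7*r^7*|Real.cos (7*ψ)|) + 14*(E*r^5)) := by
  intro r ψ hr h0 h7
  have habs : Complex.abs (Hf f ((r:ℂ) * Complex.exp ((ψ:ℂ) * I)))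
      = ∏ k ∈ Finset.range 14, Complex.abs (f ((zt ^ k * ((r:ℂ) * Complex.exp ((ψ:ℂ) * I))) ^ 2)) := by
    rw [Hf]; exact map_prod Complex.abs _ _
  rcases le_or_gt 0 (Real.cos (7*ψ)) with hcos | hcos
  · -- case 1
    have hψ14 : ψ ≤ Real.pi/14 := by
      by_contra hcon
      push_neg at hcon
      have : Real.cos (7*ψ) < 0 :=
        Real.cos_neg_of_pi_div_two_lt_of_lt (by linarith [Real.pi_pos]) (by linarith [Real.pi_pos])
      linarith
    set σ : ℕ → ℝ := fun k => if k ≤ 3 ∨ 11 ≤ k then (-1:ℝ)^k else -((-1:ℝ)^k) with hσ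
    have key : ∀ k ∈ Finset.range 14,
        Complex.abs (f ((zt ^ k * ((r:ℂ) * Complex.exp ((ψ:ℂ) * I))) ^ 2))
          ≤ C * Real.exp (σ k * (c7*r^7*Real.cos (7*ψ)) + E * r^5) := by
      intro k hk
      have hk' : k < 14 := Finset.mem_range.1 hk
      interval_cases k
      · -- k = 0
        rw [zt_pow_mul]
        refine le_trans (hfb1 r (ψ + ((0:ℕ):ℝ) * Real.pi / 7) hr ?_) (le_of_eq ?_)
        · exact Real.cos_nonneg_of_mem_Icc ⟨by push_cast; linarith [Real.pi_pos], by push_cast; linarith [Real.pi_pos]⟩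
        · have hang : Real.cos (7 * (ψ + ((0:ℕ):ℝ) * Real.pi / 7)) = (-1:ℝ)^(0:ℕ) * Real.cos (7*ψ) := by
            rw [show (7:ℝ) * (ψ + ((0:ℕ):ℝ) * Real.pi / 7) = 7*ψ + ((0:ℕ):ℝ) * Real.pi by push_cast; ring]
            exact cos_add_k_pi (7*ψ) 0
          rw [hang]
          simp only [hσ]
          norm_num
      · -- k = 1
        rw [zt_pow_mul]
        refine le_trans (hfb1 r (ψ + ((1:ℕ):ℝ) * Real.pi / 7) hr ?_) (le_of_eq ?_)
        · exact Real.cos_nonneg_of_mem_Icc ⟨by push_cast; linarith [Real.pi_pos], by push_cast; linarith [Real.pi_pos]⟩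
        · have hang : Real.cos (7 * (ψ + ((1:ℕ):ℝ) * Real.pi / 7)) = (-1:ℝ)^(1:ℕ) * Real.cos (7*ψ) := by
            rw [show (7:ℝ) * (ψ + ((1:ℕ):ℝ) * Real.pi / 7) = 7*ψ + ((1:ℕ):ℝ) * Real.pi by push_cast; ring]
            exact cos_add_k_pi (7*ψ) 1
          rw [hang]
          simp only [hσ]
          norm_num
      · -- k = 2
        rw [zt_pow_mul]
        refine le_trans (hfb1 r (ψ + ((2:ℕ):ℝ) * Real.pi / 7) hr ?_) (le_of_eq ?_)
        · exact Real.cos_nonneg_of_mem_Icc ⟨by push_cast; linarith [Real.pi_pos], by push_cast; linarith [Real.pi_pos]⟩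
        · have hang : Real.cos (7 * (ψ + ((2:ℕ):ℝ) * Real.pi / 7)) = (-1:ℝ)^(2:ℕ) * Real.cos (7*ψ) := by
            rw [show (7:ℝ) * (ψ + ((2:ℕ):ℝ) * Real.pi / 7) = 7*ψ + ((2:ℕ):ℝ) * Real.pi by push_cast; ring]
            exact cos_add_k_pi (7*ψ) 2
          rw [hang]
          simp only [hσ]
          norm_num
      · -- k = 3
        rw [zt_pow_mul]
        refine le_trans (hfb1 r (ψ + ((3:ℕ):ℝ) * Real.pi / 7) hr ?_) (le_of_eq ?_)
        · exact Real.cos_nonneg_of_mem_Icc ⟨by push_cast; linarith [Real.pi_pos], by push_cast; linarith [Real.pi_pos]⟩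
        · have hang : Real.cos (7 * (ψ + ((3:ℕ):ℝ) * Real.pi / 7)) = (-1:ℝ)^(3:ℕ) * Real.cos (7*ψ) := by
            rw [show (7:ℝ) * (ψ + ((3:ℕ):ℝ) * Real.pi / 7) = 7*ψ + ((3:ℕ):ℝ) * Real.pi by push_cast; ring]
            exact cos_add_k_pi (7*ψ) 3
          rw [hang]
          simp only [hσ]
          norm_num
      · -- k = 4
        rw [zt_pow_mul]
        refine le_trans (hfb2 r (ψ + ((4:ℕ):ℝ) * Real.pi / 7) hr ?_) (le_of_eq ?_)
        · exact Real.cos_nonpos_of_pi_div_two_le_of_le (by push_cast; linarith [Real.pi_pos]) (by push_cast; linarith [Real.pi_pos])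
        · have hang : Real.cos (7 * (ψ + ((4:ℕ):ℝ) * Real.pi / 7)) = (-1:ℝ)^(4:ℕ) * Real.cos (7*ψ) := by
            rw [show (7:ℝ) * (ψ + ((4:ℕ):ℝ) * Real.pi / 7) = 7*ψ + ((4:ℕ):ℝ) * Real.pi by push_cast; ring]
            exact cos_add_k_pi (7*ψ) 4
          rw [hang]
          simp only [hσ]
          norm_num
      · -- k = 5
        rw [zt_pow_mul]
        refine le_trans (hfb2 r (ψ + ((5:ℕ):ℝ) * Real.pi / 7) hr ?_) (le_of_eq ?_)
        · exact Real.cos_nonpos_of_pi_div_two_le_of_le (by push_cast; linarith [Real.pi_pos]) (by push_cast; linarith [Real.pi_pos])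
        · have hang : Real.cos (7 * (ψ + ((5:ℕ):ℝ) * Real.pi / 7)) = (-1:ℝ)^(5:ℕ) * Real.cos (7*ψ) := by
            rw [show (7:ℝ) * (ψ + ((5:ℕ):ℝ) * Real.pi / 7) = 7*ψ + ((5:ℕ):ℝ) * Real.pi by push_cast; ring]
            exact cos_add_k_pi (7*ψ) 5
          rw [hang]
          simp only [hσ]
          norm_num
      · -- k = 6
        rw [zt_pow_mul]
        refine le_trans (hfb2 r (ψ + ((6:ℕ):ℝ) * Real.pi / 7) hr ?_) (le_of_eq ?_)
        · exact Real.cos_nonpos_of_pi_div_two_le_of_le (by push_cast; linarith [Real.pi_pos]) (by push_cast; linarith [Real.pi_pos])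
        · have hang : Real.cos (7 * (ψ + ((6:ℕ):ℝ) * Real.pi / 7)) = (-1:ℝ)^(6:ℕ) * Real.cos (7*ψ) := by
            rw [show (7:ℝ) * (ψ + ((6:ℕ):ℝ) * Real.pi / 7) = 7*ψ + ((6:ℕ):ℝ) * Real.pi by push_cast; ring]
            exact cos_add_k_pi (7*ψ) 6
          rw [hang]
          simp only [hσ]
          norm_num
      · -- k = 7
        rw [zt_pow_mul]
        refine le_trans (hfb2 r (ψ + ((7:ℕ):ℝ) * Real.pi / 7) hr ?_) (le_of_eq ?_)
        · exact Real.cos_nonpos_of_pi_div_two_le_of_le (by push_cast; linarith [Real.pi_pos]) (by push_cast; linarith [Real.pi_pos])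
        · have hang : Real.cos (7 * (ψ + ((7:ℕ):ℝ) * Real.pi / 7)) = (-1:ℝ)^(7:ℕ) * Real.cos (7*ψ) := by
            rw [show (7:ℝ) * (ψ + ((7:ℕ):ℝ) * Real.pi / 7) = 7*ψ + ((7:ℕ):ℝ) * Real.pi by push_cast; ring]
            exact cos_add_k_pi (7*ψ) 7
          rw [hang]
          simp only [hσ]
          norm_num
      · -- k = 8
        rw [zt_pow_mul]
        refine le_trans (hfb2 r (ψ + ((8:ℕ):ℝ) * Real.pi / 7) hr ?_) (le_of_eq ?_)
        · exact Real.cos_nonpos_of_pi_div_two_le_of_le (by push_cast; linarith [Real.pi_pos]) (by push_cast; linarith [Real.pi_pos])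
        · have hang : Real.cos (7 * (ψ + ((8:ℕ):ℝ) * Real.pi / 7)) = (-1:ℝ)^(8:ℕ) * Real.cos (7*ψ) := by
            rw [show (7:ℝ) * (ψ + ((8:ℕ):ℝ) * Real.pi / 7) = 7*ψ + ((8:ℕ):ℝ) * Real.pi by push_cast; ring]
            exact cos_add_k_pi (7*ψ) 8
          rw [hang]
          simp only [hσ]
          norm_num
      · -- k = 9
        rw [zt_pow_mul]
        refine le_trans (hfb2 r (ψ + ((9:ℕ):ℝ) * Real.pi / 7) hr ?_) (le_of_eq ?_)
        · exact Real.cos_nonpos_of_pi_div_two_le_of_le (by push_cast; linarith [Real.pi_pos]) (by push_cast; linarith [Real.pi_pos])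
        · have hang : Real.cos (7 * (ψ + ((9:ℕ):ℝ) * Real.pi / 7)) = (-1:ℝ)^(9:ℕ) * Real.cos (7*ψ) := by
            rw [show (7:ℝ) * (ψ + ((9:ℕ):ℝ) * Real.pi / 7) = 7*ψ + ((9:ℕ):ℝ) * Real.pi by push_cast; ring]
            exact cos_add_k_pi (7*ψ) 9
          rw [hang]
          simp only [hσ]
          norm_num
      · -- k = 10
        rw [zt_pow_mul]
        refine le_trans (hfb2 r (ψ + ((10:ℕ):ℝ) * Real.pi / 7) hr ?_) (le_of_eq ?_)
        · exact Real.cos_nonpos_of_pi_div_two_le_of_le (by push_cast; linarith [Real.pi_pos]) (by push_cast; linarith [Real.pi_pos])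
        · have hang : Real.cos (7 * (ψ + ((10:ℕ):ℝ) * Real.pi / 7)) = (-1:ℝ)^(10:ℕ) * Real.cos (7*ψ) := by
            rw [show (7:ℝ) * (ψ + ((10:ℕ):ℝ) * Real.pi / 7) = 7*ψ + ((10:ℕ):ℝ) * Real.pi by push_cast; ring]
            exact cos_add_k_pi (7*ψ) 10
          rw [hang]
          simp only [hσ]
          norm_num
      · -- k = 11
        rw [zt_pow_mul]
        refine le_trans (hfb1 r (ψ + ((11:ℕ):ℝ) * Real.pi / 7) hr ?_) (le_of_eq ?_)
        · rw [show Real.cos (ψ + ((11:ℕ):ℝ) * Real.pi / 7) = Real.cos ((ψ + ((11:ℕ):ℝ) * Real.pi / 7) - 2*Real.pi) from (Real.cos_sub_two_pi _).symm]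
          exact Real.cos_nonneg_of_mem_Icc ⟨by push_cast; linarith [Real.pi_pos], by push_cast; linarith [Real.pi_pos]⟩
        · have hang : Real.cos (7 * (ψ + ((11:ℕ):ℝ) * Real.pi / 7)) = (-1:ℝ)^(11:ℕ) * Real.cos (7*ψ) := by
            rw [show (7:ℝ) * (ψ + ((11:ℕ):ℝ) * Real.pi / 7) = 7*ψ + ((11:ℕ):ℝ) * Real.pi by push_cast; ring]
            exact cos_add_k_pi (7*ψ) 11
          rw [hang]
          simp only [hσ]
          norm_num
      · -- k = 12
        rw [zt_pow_mul]
        refine le_trans (hfb1 r (ψ + ((12:ℕ):ℝ) * Real.pi / 7) hr ?_) (le_of_eq ?_)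
        · rw [show Real.cos (ψ + ((12:ℕ):ℝ) * Real.pi / 7) = Real.cos ((ψ + ((12:ℕ):ℝ) * Real.pi / 7) - 2*Real.pi) from (Real.cos_sub_two_pi _).symm]
          exact Real.cos_nonneg_of_mem_Icc ⟨by push_cast; linarith [Real.pi_pos], by push_cast; linarith [Real.pi_pos]⟩
        · have hang : Real.cos (7 * (ψ + ((12:ℕ):ℝ) * Real.pi / 7)) = (-1:ℝ)^(12:ℕ) * Real.cos (7*ψ) := by
            rw [show (7:ℝ) * (ψ + ((12:ℕ):ℝ) * Real.pi / 7) = 7*ψ + ((12:ℕ):ℝ) * Real.pi by push_cast; ring]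
            exact cos_add_k_pi (7*ψ) 12
          rw [hang]
          simp only [hσ]
          norm_num
      · -- k = 13
        rw [zt_pow_mul]
        refine le_trans (hfb1 r (ψ + ((13:ℕ):ℝ) * Real.pi / 7) hr ?_) (le_of_eq ?_)
        · rw [show Real.cos (ψ + ((13:ℕ):ℝ) * Real.pi / 7) = Real.cos ((ψ + ((13:ℕ):ℝ) * Real.pi / 7) - 2*Real.pi) from (Real.cos_sub_two_pi _).symm]
          exact Real.cos_nonneg_of_mem_Icc ⟨by push_cast; linarith [Real.pi_pos], by push_cast; linarith [Real.pi_pos]⟩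
        · have hang : Real.cos (7 * (ψ + ((13:ℕ):ℝ) * Real.pi / 7)) = (-1:ℝ)^(13:ℕ) * Real.cos (7*ψ) := by
            rw [show (7:ℝ) * (ψ + ((13:ℕ):ℝ) * Real.pi / 7) = 7*ψ + ((13:ℕ):ℝ) * Real.pi by push_cast; ring]
            exact cos_add_k_pi (7*ψ) 13
          rw [hang]
          simp only [hσ]
          norm_num
    rw [habs]
    calc ∏ k ∈ Finset.range 14, Complex.abs (f ((zt ^ k * ((r:ℂ) * Complex.exp ((ψ:ℂ) * I))) ^ 2))
        ≤ ∏ k ∈ Finset.range 14, (C * Real.exp (σ k * (c7*r^7*Real.cos (7*ψ)) + E * r^5)) :=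
          Finset.prod_le_prod (fun k _ => apply_nonneg _ _) key
      _ = C^14 * Real.exp (∑ k ∈ Finset.range 14, (σ k * (c7*r^7*Real.cos (7*ψ)) + E * r^5)) := by
          rw [Finset.prod_mul_distrib, Finset.prod_const, Finset.card_range, Real.exp_sum]
      _ = C^14 * Real.exp (-(2*c7*r^7*|Real.cos (7*ψ)|) + 14*(E*r^5)) := by
          congr 1
          rw [_root_.abs_of_nonneg hcos]
          simp only [hσ, Finset.sum_range_succ, Finset.sum_range_zero]
          norm_num
          ring
  · -- case 2
    have hψ14 : Real.pi/14 < ψ := by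
      by_contra hcon
      push_neg at hcon
      have : 0 ≤ Real.cos (7*ψ) :=
        Real.cos_nonneg_of_mem_Icc ⟨by linarith [Real.pi_pos], by linarith [Real.pi_pos]⟩
      linarith
    set σ : ℕ → ℝ := fun k => if k ≤ 2 ∨ 10 ≤ k then (-1:ℝ)^k else -((-1:ℝ)^k) with hσ
    have key : ∀ k ∈ Finset.range 14,
        Complex.abs (f ((zt ^ k * ((r:ℂ) * Complex.exp ((ψ:ℂ) * I))) ^ 2))
          ≤ C * Real.exp (σ k * (c7*r^7*Real.cos (7*ψ)) + E * r^5) := by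
      intro k hk
      have hk' : k < 14 := Finset.mem_range.1 hk
      interval_cases k
      · -- k = 0
        rw [zt_pow_mul]
        refine le_trans (hfb1 r (ψ + ((0:ℕ):ℝ) * Real.pi / 7) hr ?_) (le_of_eq ?_)
        · exact Real.cos_nonneg_of_mem_Icc ⟨by push_cast; linarith [Real.pi_pos], by push_cast; linarith [Real.pi_pos]⟩
        · have hang : Real.cos (7 * (ψ + ((0:ℕ):ℝ) * Real.pi / 7)) = (-1:ℝ)^(0:ℕ) * Real.cos (7*ψ) := by
            rw [show (7:ℝ) * (ψ + ((0:ℕ):ℝ) * Real.pi / 7) = 7*ψ + ((0:ℕ):ℝ) * Real.pi by push_cast; ring]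
            exact cos_add_k_pi (7*ψ) 0
          rw [hang]
          simp only [hσ]
          norm_num
      · -- k = 1
        rw [zt_pow_mul]
        refine le_trans (hfb1 r (ψ + ((1:ℕ):ℝ) * Real.pi / 7) hr ?_) (le_of_eq ?_)
        · exact Real.cos_nonneg_of_mem_Icc ⟨by push_cast; linarith [Real.pi_pos], by push_cast; linarith [Real.pi_pos]⟩
        · have hang : Real.cos (7 * (ψ + ((1:ℕ):ℝ) * Real.pi / 7)) = (-1:ℝ)^(1:ℕ) * Real.cos (7*ψ) := by
            rw [show (7:ℝ) * (ψ + ((1:ℕ):ℝ) * Real.pi / 7) = 7*ψ + ((1:ℕ):ℝ) * Real.pi by push_cast; ring]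
            exact cos_add_k_pi (7*ψ) 1
          rw [hang]
          simp only [hσ]
          norm_num
      · -- k = 2
        rw [zt_pow_mul]
        refine le_trans (hfb1 r (ψ + ((2:ℕ):ℝ) * Real.pi / 7) hr ?_) (le_of_eq ?_)
        · exact Real.cos_nonneg_of_mem_Icc ⟨by push_cast; linarith [Real.pi_pos], by push_cast; linarith [Real.pi_pos]⟩
        · have hang : Real.cos (7 * (ψ + ((2:ℕ):ℝ) * Real.pi / 7)) = (-1:ℝ)^(2:ℕ) * Real.cos (7*ψ) := by
            rw [show (7:ℝ) * (ψ + ((2:ℕ):ℝ) * Real.pi / 7) = 7*ψ + ((2:ℕ):ℝ) * Real.pi by push_cast; ring]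
            exact cos_add_k_pi (7*ψ) 2
          rw [hang]
          simp only [hσ]
          norm_num
      · -- k = 3
        rw [zt_pow_mul]
        refine le_trans (hfb2 r (ψ + ((3:ℕ):ℝ) * Real.pi / 7) hr ?_) (le_of_eq ?_)
        · exact Real.cos_nonpos_of_pi_div_two_le_of_le (by push_cast; linarith [Real.pi_pos]) (by push_cast; linarith [Real.pi_pos])
        · have hang : Real.cos (7 * (ψ + ((3:ℕ):ℝ) * Real.pi / 7)) = (-1:ℝ)^(3:ℕ) * Real.cos (7*ψ) := by
            rw [show (7:ℝ) * (ψ + ((3:ℕ):ℝ) * Real.pi / 7) = 7*ψ + ((3:ℕ):ℝ) * Real.pi by push_cast; ring]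
            exact cos_add_k_pi (7*ψ) 3
          rw [hang]
          simp only [hσ]
          norm_num
      · -- k = 4
        rw [zt_pow_mul]
        refine le_trans (hfb2 r (ψ + ((4:ℕ):ℝ) * Real.pi / 7) hr ?_) (le_of_eq ?_)
        · exact Real.cos_nonpos_of_pi_div_two_le_of_le (by push_cast; linarith [Real.pi_pos]) (by push_cast; linarith [Real.pi_pos])
        · have hang : Real.cos (7 * (ψ + ((4:ℕ):ℝ) * Real.pi / 7)) = (-1:ℝ)^(4:ℕ) * Real.cos (7*ψ) := by
            rw [show (7:ℝ) * (ψ + ((4:ℕ):ℝ) * Real.pi / 7) = 7*ψ + ((4:ℕ):ℝ) * Real.pi by push_cast; ring]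
            exact cos_add_k_pi (7*ψ) 4
          rw [hang]
          simp only [hσ]
          norm_num
      · -- k = 5
        rw [zt_pow_mul]
        refine le_trans (hfb2 r (ψ + ((5:ℕ):ℝ) * Real.pi / 7) hr ?_) (le_of_eq ?_)
        · exact Real.cos_nonpos_of_pi_div_two_le_of_le (by push_cast; linarith [Real.pi_pos]) (by push_cast; linarith [Real.pi_pos])
        · have hang : Real.cos (7 * (ψ + ((5:ℕ):ℝ) * Real.pi / 7)) = (-1:ℝ)^(5:ℕ) * Real.cos (7*ψ) := by
            rw [show (7:ℝ) * (ψ + ((5:ℕ):ℝ) * Real.pi / 7) = 7*ψ + ((5:ℕ):ℝ) * Real.pi by push_cast; ring]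
            exact cos_add_k_pi (7*ψ) 5
          rw [hang]
          simp only [hσ]
          norm_num
      · -- k = 6
        rw [zt_pow_mul]
        refine le_trans (hfb2 r (ψ + ((6:ℕ):ℝ) * Real.pi / 7) hr ?_) (le_of_eq ?_)
        · exact Real.cos_nonpos_of_pi_div_two_le_of_le (by push_cast; linarith [Real.pi_pos]) (by push_cast; linarith [Real.pi_pos])
        · have hang : Real.cos (7 * (ψ + ((6:ℕ):ℝ) * Real.pi / 7)) = (-1:ℝ)^(6:ℕ) * Real.cos (7*ψ) := by
            rw [show (7:ℝ) * (ψ + ((6:ℕ):ℝ) * Real.pi / 7) = 7*ψ + ((6:ℕ):ℝ) * Real.pi by push_cast; ring]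
            exact cos_add_k_pi (7*ψ) 6
          rw [hang]
          simp only [hσ]
          norm_num
      · -- k = 7
        rw [zt_pow_mul]
        refine le_trans (hfb2 r (ψ + ((7:ℕ):ℝ) * Real.pi / 7) hr ?_) (le_of_eq ?_)
        · exact Real.cos_nonpos_of_pi_div_two_le_of_le (by push_cast; linarith [Real.pi_pos]) (by push_cast; linarith [Real.pi_pos])
        · have hang : Real.cos (7 * (ψ + ((7:ℕ):ℝ) * Real.pi / 7)) = (-1:ℝ)^(7:ℕ) * Real.cos (7*ψ) := by
            rw [show (7:ℝ) * (ψ + ((7:ℕ):ℝ) * Real.pi / 7) = 7*ψ + ((7:ℕ):ℝ) * Real.pi by push_cast; ring]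
            exact cos_add_k_pi (7*ψ) 7
          rw [hang]
          simp only [hσ]
          norm_num
      · -- k = 8
        rw [zt_pow_mul]
        refine le_trans (hfb2 r (ψ + ((8:ℕ):ℝ) * Real.pi / 7) hr ?_) (le_of_eq ?_)
        · exact Real.cos_nonpos_of_pi_div_two_le_of_le (by push_cast; linarith [Real.pi_pos]) (by push_cast; linarith [Real.pi_pos])
        · have hang : Real.cos (7 * (ψ + ((8:ℕ):ℝ) * Real.pi / 7)) = (-1:ℝ)^(8:ℕ) * Real.cos (7*ψ) := by
            rw [show (7:ℝ) * (ψ + ((8:ℕ):ℝ) * Real.pi / 7) = 7*ψ + ((8:ℕ):ℝ) * Real.pi by push_cast; ring]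
            exact cos_add_k_pi (7*ψ) 8
          rw [hang]
          simp only [hσ]
          norm_num
      · -- k = 9
        rw [zt_pow_mul]
        refine le_trans (hfb2 r (ψ + ((9:ℕ):ℝ) * Real.pi / 7) hr ?_) (le_of_eq ?_)
        · exact Real.cos_nonpos_of_pi_div_two_le_of_le (by push_cast; linarith [Real.pi_pos]) (by push_cast; linarith [Real.pi_pos])
        · have hang : Real.cos (7 * (ψ + ((9:ℕ):ℝ) * Real.pi / 7)) = (-1:ℝ)^(9:ℕ) * Real.cos (7*ψ) := by
            rw [show (7:ℝ) * (ψ + ((9:ℕ):ℝ) * Real.pi / 7) = 7*ψ + ((9:ℕ):ℝ) * Real.pi by push_cast; ring]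
            exact cos_add_k_pi (7*ψ) 9
          rw [hang]
          simp only [hσ]
          norm_num
      · -- k = 10
        rw [zt_pow_mul]
        refine le_trans (hfb1 r (ψ + ((10:ℕ):ℝ) * Real.pi / 7) hr ?_) (le_of_eq ?_)
        · rw [show Real.cos (ψ + ((10:ℕ):ℝ) * Real.pi / 7) = Real.cos ((ψ + ((10:ℕ):ℝ) * Real.pi / 7) - 2*Real.pi) from (Real.cos_sub_two_pi _).symm]
          exact Real.cos_nonneg_of_mem_Icc ⟨by push_cast; linarith [Real.pi_pos], by push_cast; linarith [Real.pi_pos]⟩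
        · have hang : Real.cos (7 * (ψ + ((10:ℕ):ℝ) * Real.pi / 7)) = (-1:ℝ)^(10:ℕ) * Real.cos (7*ψ) := by
            rw [show (7:ℝ) * (ψ + ((10:ℕ):ℝ) * Real.pi / 7) = 7*ψ + ((10:ℕ):ℝ) * Real.pi by push_cast; ring]
            exact cos_add_k_pi (7*ψ) 10
          rw [hang]
          simp only [hσ]
          norm_num
      · -- k = 11
        rw [zt_pow_mul]
        refine le_trans (hfb1 r (ψ + ((11:ℕ):ℝ) * Real.pi / 7) hr ?_) (le_of_eq ?_)
        · rw [show Real.cos (ψ + ((11:ℕ):ℝ) * Real.pi / 7) = Real.cos ((ψ + ((11:ℕ):ℝ) * Real.pi / 7) - 2*Real.pi) from (Real.cos_sub_two_pi _).symm]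
          exact Real.cos_nonneg_of_mem_Icc ⟨by push_cast; linarith [Real.pi_pos], by push_cast; linarith [Real.pi_pos]⟩
        · have hang : Real.cos (7 * (ψ + ((11:ℕ):ℝ) * Real.pi / 7)) = (-1:ℝ)^(11:ℕ) * Real.cos (7*ψ) := by
            rw [show (7:ℝ) * (ψ + ((11:ℕ):ℝ) * Real.pi / 7) = 7*ψ + ((11:ℕ):ℝ) * Real.pi by push_cast; ring]
            exact cos_add_k_pi (7*ψ) 11
          rw [hang]
          simp only [hσ]
          norm_num
      · -- k = 12
        rw [zt_pow_mul]
        refine le_trans (hfb1 r (ψ + ((12:ℕ):ℝ) * Real.pi / 7) hr ?_) (le_of_eq ?_)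
        · rw [show Real.cos (ψ + ((12:ℕ):ℝ) * Real.pi / 7) = Real.cos ((ψ + ((12:ℕ):ℝ) * Real.pi / 7) - 2*Real.pi) from (Real.cos_sub_two_pi _).symm]
          exact Real.cos_nonneg_of_mem_Icc ⟨by push_cast; linarith [Real.pi_pos], by push_cast; linarith [Real.pi_pos]⟩
        · have hang : Real.cos (7 * (ψ + ((12:ℕ):ℝ) * Real.pi / 7)) = (-1:ℝ)^(12:ℕ) * Real.cos (7*ψ) := by
            rw [show (7:ℝ) * (ψ + ((12:ℕ):ℝ) * Real.pi / 7) = 7*ψ + ((12:ℕ):ℝ) * Real.pi by push_cast; ring]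
            exact cos_add_k_pi (7*ψ) 12
          rw [hang]
          simp only [hσ]
          norm_num
      · -- k = 13
        rw [zt_pow_mul]
        refine le_trans (hfb1 r (ψ + ((13:ℕ):ℝ) * Real.pi / 7) hr ?_) (le_of_eq ?_)
        · rw [show Real.cos (ψ + ((13:ℕ):ℝ) * Real.pi / 7) = Real.cos ((ψ + ((13:ℕ):ℝ) * Real.pi / 7) - 2*Real.pi) from (Real.cos_sub_two_pi _).symm]
          exact Real.cos_nonneg_of_mem_Icc ⟨by push_cast; linarith [Real.pi_pos], by push_cast; linarith [Real.pi_pos]⟩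
        · have hang : Real.cos (7 * (ψ + ((13:ℕ):ℝ) * Real.pi / 7)) = (-1:ℝ)^(13:ℕ) * Real.cos (7*ψ) := by
            rw [show (7:ℝ) * (ψ + ((13:ℕ):ℝ) * Real.pi / 7) = 7*ψ + ((13:ℕ):ℝ) * Real.pi by push_cast; ring]
            exact cos_add_k_pi (7*ψ) 13
          rw [hang]
          simp only [hσ]
          norm_num
    rw [habs]
    calc ∏ k ∈ Finset.range 14, Complex.abs (f ((zt ^ k * ((r:ℂ) * Complex.exp ((ψ:ℂ) * I))) ^ 2))
        ≤ ∏ k ∈ Finset.range 14, (C * Real.exp (σ k * (c7*r^7*Real.cos (7*ψ)) + E * r^5)) :=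
          Finset.prod_le_prod (fun k _ => apply_nonneg _ _) key
      _ = C^14 * Real.exp (∑ k ∈ Finset.range 14, (σ k * (c7*r^7*Real.cos (7*ψ)) + E * r^5)) := by
          rw [Finset.prod_mul_distrib, Finset.prod_const, Finset.card_range, Real.exp_sum]
      _ = C^14 * Real.exp (-(2*c7*r^7*|Real.cos (7*ψ)|) + 14*(E*r^5)) := by
          congr 1
          rw [_root_.abs_of_neg hcos]
          simp only [hσ, Finset.sum_range_succ, Finset.sum_range_zero]
          norm_num
          ring

lemma cos_term_le {c r : ℝ} (hr : 1 ≤ r) (t : ℝ) {n : ℕ} (hn : n ≤ 5) :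
    c * r ^ n * Real.cos t ≤ |c| * r ^ 5 := by
  have h0 : (0:ℝ) ≤ r := le_trans zero_le_one hr
  have h1 : c * Real.cos t ≤ |c| := by
    calc c * Real.cos t ≤ |c * Real.cos t| := le_abs_self _
    _ = |c| * |Real.cos t| := abs_mul _ _
    _ ≤ |c| * 1 := mul_le_mul_of_nonneg_left (Real.abs_cos_le_one t) (abs_nonneg c)
    _ = |c| := mul_one _
  have h2 : r ^ n ≤ r ^ 5 := pow_le_pow_right₀ hr hn
  calc c * r ^ n * Real.cos t = (c * Real.cos t) * r ^ n := by ring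
  _ ≤ |c| * r ^ n := mul_le_mul_of_nonneg_right h1 (pow_nonneg h0 n)
  _ ≤ |c| * r ^ 5 := mul_le_mul_of_nonneg_left h2 (abs_nonneg c)

section FactorBounds

variable {c7 c5 c3 c1 C R : ℝ} {f : ℂ → ℂ}

lemma hfb_pos (hR : 1 ≤ R)
    (hbound : ∀ μ : ℂ, μ ∉ (fun r : ℝ => (r : ℂ)) '' Iic 0 → R ≤ Complex.abs μ →
      Complex.abs (f μ) ≤ C * (Complex.abs μ) ^ (-(3 / 4) : ℝ) *
        Real.exp (((c7 : ℂ) * μ ^ ((7 : ℂ) / 2) + (c5 : ℂ) * μ ^ ((5 : ℂ) / 2)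
          + (c3 : ℂ) * μ ^ ((3 : ℂ) / 2) + (c1 : ℂ) * μ ^ ((1 : ℂ) / 2)).re))
    (hC : 0 < C) (hf : Continuous f) :
    ∀ r ψ : ℝ, max (Real.sqrt R) 1 ≤ r → 0 ≤ Real.cos ψ →
      Complex.abs (f (((r:ℂ) * Complex.exp ((ψ:ℂ) * I)) ^ 2))
        ≤ C * Real.exp (c7 * r^7 * Real.cos (7*ψ) + (|c5|+|c3|+|c1|) * r^5) := by
  intro r ψ hr hcos
  have hr1 : (1:ℝ) ≤ r := le_trans (le_max_right _ _) hr
  have hr0 : (0:ℝ) ≤ r := le_trans zero_le_one hr1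
  have hre : 0 ≤ ((r:ℂ) * Complex.exp ((ψ:ℂ) * I)).re := by
    rw [polar_re]; exact mul_nonneg hr0 hcos
  have habs : Real.sqrt R ≤ Complex.abs ((r:ℂ) * Complex.exp ((ψ:ℂ) * I)) := by
    rw [polar_abs hr0]; exact le_trans (le_max_left _ _) hr
  have h := bdd_closed hR hbound hC hf _ hre habs
  rw [Pf_re_polar] at h
  refine le_trans h ?_
  apply mul_le_mul_of_nonneg_left _ hC.le
  apply Real.exp_le_exp.2
  have h5 := cos_term_le (c := c5) hr1 (5*ψ) (le_refl 5)
  have h3 := cos_term_le (c := c3) hr1 (3*ψ) (by norm_num : 3 ≤ 5)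
  have h1 := cos_term_le (c := c1) hr1 ψ (by norm_num : 1 ≤ 5)
  have h1' : c1 * r * Real.cos ψ ≤ |c1| * r ^ 5 := by
    have : c1 * r = c1 * r ^ 1 := by ring
    rw [this]; exact h1
  linarith

lemma hfb_neg (hR : 1 ≤ R)
    (hbound : ∀ μ : ℂ, μ ∉ (fun r : ℝ => (r : ℂ)) '' Iic 0 → R ≤ Complex.abs μ →
      Complex.abs (f μ) ≤ C * (Complex.abs μ) ^ (-(3 / 4) : ℝ) *
        Real.exp (((c7 : ℂ) * μ ^ ((7 : ℂ) / 2) + (c5 : ℂ) * μ ^ ((5 : ℂ) / 2)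
          + (c3 : ℂ) * μ ^ ((3 : ℂ) / 2) + (c1 : ℂ) * μ ^ ((1 : ℂ) / 2)).re))
    (hC : 0 < C) (hf : Continuous f) :
    ∀ r ψ : ℝ, max (Real.sqrt R) 1 ≤ r → Real.cos ψ ≤ 0 →
      Complex.abs (f (((r:ℂ) * Complex.exp ((ψ:ℂ) * I)) ^ 2))
        ≤ C * Real.exp (-(c7 * r^7 * Real.cos (7*ψ)) + (|c5|+|c3|+|c1|) * r^5) := by
  intro r ψ hr hcos
  have hr1 : (1:ℝ) ≤ r := le_trans (le_max_right _ _) hr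
  have hr0 : (0:ℝ) ≤ r := le_trans zero_le_one hr1
  have hre : ((r:ℂ) * Complex.exp ((ψ:ℂ) * I)).re ≤ 0 := by
    rw [polar_re]; exact mul_nonpos_of_nonneg_of_nonpos hr0 hcos
  have habs : Real.sqrt R ≤ Complex.abs ((r:ℂ) * Complex.exp ((ψ:ℂ) * I)) := by
    rw [polar_abs hr0]; exact le_trans (le_max_left _ _) hr
  have h := bdd_closed_neg hR hbound hC hf _ hre habs
  rw [Pf_re_polar] at h
  refine le_trans h ?_
  apply mul_le_mul_of_nonneg_left _ hC.le
  apply Real.exp_le_exp.2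
  have h5 := cos_term_le (c := -c5) hr1 (5*ψ) (le_refl 5)
  have h3 := cos_term_le (c := -c3) hr1 (3*ψ) (by norm_num : 3 ≤ 5)
  have h1 := cos_term_le (c := -c1) hr1 ψ (by norm_num : 1 ≤ 5)
  rw [abs_neg] at h5 h3 h1
  have h1' : -(c1 * r * Real.cos ψ) ≤ |c1| * r ^ 5 := by
    have : -(c1 * r * Real.cos ψ) = (-c1) * r ^ 1 * Real.cos ψ := by ring
    rw [this]; exact h1
  have h5' : -(c5 * r^5 * Real.cos (5*ψ)) ≤ |c5| * r ^ 5 := by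
    have : -(c5 * r^5 * Real.cos (5*ψ)) = (-c5) * r ^ 5 * Real.cos (5*ψ) := by ring
    rw [this]; exact h5
  have h3' : -(c3 * r^3 * Real.cos (3*ψ)) ≤ |c3| * r ^ 5 := by
    have : -(c3 * r^3 * Real.cos (3*ψ)) = (-c3) * r ^ 3 * Real.cos (3*ψ) := by ring
    rw [this]; exact h3
  linarith

end FactorBounds

lemma zt_pow_14 : zt ^ 14 = 1 := by
  rw [zt, ← Complex.exp_nat_mul]
  rw [show ((14:ℕ):ℂ) * ((↑(Real.pi/7) : ℂ) * I) = 2 * (Real.pi:ℂ) * I by push_cast; ring]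
  exact Complex.exp_two_pi_mul_I

lemma Hf_rot (f : ℂ → ℂ) (z : ℂ) : Hf f (zt * z) = Hf f z := by
  unfold Hf
  have hre : ∀ k : ℕ, zt ^ k * (zt * z) = zt ^ (k+1) * z := fun k => by rw [pow_succ]; ring
  simp_rw [hre]
  rw [Finset.prod_range_succ, show (14:ℕ) = 13 + 1 from rfl,
    Finset.prod_range_succ' (fun k => f ((zt ^ k * z) ^ 2)) 13]
  congr 1
  rw [show (13:ℕ)+1 = 14 from rfl, zt_pow_14, pow_zero]

lemma Hf_rot_pow (f : ℂ → ℂ) (m : ℕ) (z : ℂ) : Hf f (zt ^ m * z) = Hf f z := by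
  induction m with
  | zero => simp
  | succ n ih =>
    rw [show zt ^ (n+1) * z = zt * (zt ^ n * z) by rw [pow_succ]; ring, Hf_rot, ih]

/-- every nonzero point can be rotated into the fundamental sector. -/
lemma exists_rot_sector (z : ℂ) (hz : z ≠ 0) :
    ∃ (m : ℕ) (ψ : ℝ), 0 ≤ ψ ∧ ψ ≤ Real.pi/7 ∧
      zt ^ m * z = ((Complex.abs z : ℝ) : ℂ) * Complex.exp ((ψ:ℂ) * I) := by
  set a : ℝ := Real.pi / 7 with ha
  have ha0 : 0 < a := by rw [ha]; positivity
  set φ : ℝ := Complex.arg z with hφ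
  set j : ℤ := -⌊φ / a⌋ with hj
  set ψ : ℝ := φ + j * a with hψdef
  have hψ0 : 0 ≤ ψ ∧ ψ < a := by
    constructor
    · have := Int.fract_nonneg (φ / a)
      have h1 : ψ = a * Int.fract (φ / a) := by
        rw [hψdef, Int.fract, hj]
        field_simp
        push_cast; ring
      rw [h1]; positivity
    · have := Int.fract_lt_one (φ / a)
      have h1 : ψ = a * Int.fract (φ / a) := by
        rw [hψdef, Int.fract, hj]
        field_simp
        push_cast; ring
      rw [h1]
      calc a * Int.fract (φ / a) < a * 1 := by
            apply mul_lt_mul_of_pos_left (Int.fract_lt_one _) ha0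
      _ = a := mul_one a
  set m : ℕ := (j % 14).toNat with hm
  have hmz : ((m:ℤ)) = j % 14 := Int.toNat_of_nonneg (Int.emod_nonneg j (by norm_num))
  set q : ℤ := j / 14 with hq
  have hmj : (m : ℝ) = (j : ℝ) - 14 * (q : ℝ) := by
    have h1 : (m : ℤ) = j - 14 * q := by rw [hmz, hq, Int.emod_def]
    exact_mod_cast congrArg (Int.cast : ℤ → ℝ) h1
  refine ⟨m, ψ, hψ0.1, le_of_lt (lt_of_lt_of_le hψ0.2 (le_refl a)), ?_⟩
  have hzp : z = ((Complex.abs z : ℝ) : ℂ) * Complex.exp ((φ:ℂ) * I) := by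
    rw [hφ]; exact (Complex.norm_mul_exp_arg_mul_I z).symm
  calc zt ^ m * z = zt ^ m * (((Complex.abs z : ℝ) : ℂ) * Complex.exp ((φ:ℂ) * I)) := by
        rw [← hzp]
  _ = ((Complex.abs z : ℝ) : ℂ) * Complex.exp ((↑(φ + m * Real.pi / 7) : ℂ) * I) := zt_pow_mul m _ φ
  _ = ((Complex.abs z : ℝ) : ℂ) * Complex.exp ((ψ:ℂ) * I) := by
      congr 1
      have hang : φ + (m:ℝ) * Real.pi / 7 = ψ + ((-q : ℤ) : ℝ) * (2 * Real.pi) := by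
        rw [hψdef, hmj, ha]
        push_cast
        ring
      rw [hang, Complex.ofReal_add, add_mul, Complex.exp_add,
        show ((((-q : ℤ) : ℝ) * (2 * Real.pi) : ℝ) : ℂ) * I
          = ((-q : ℤ) : ℂ) * (2 * (Real.pi : ℂ) * I) by push_cast; ring,
        Complex.exp_int_mul_two_pi_mul_I, mul_one]

lemma polar_im (r ψ : ℝ) : ((r : ℂ) * Complex.exp ((ψ : ℂ) * I)).im = r * Real.sin ψ := by
  rw [Complex.im_ofReal_mul, Complex.exp_ofReal_mul_I_im]

lemma arg_polar {r ψ : ℝ} (hr : 0 < r) (h1 : -Real.pi < ψ) (h2 : ψ ≤ Real.pi) :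
    ((r : ℂ) * Complex.exp ((ψ : ℂ) * I)).arg = ψ := by
  rw [Complex.exp_mul_I, Complex.arg_real_mul _ hr, Complex.arg_cos_add_sin_mul_I ⟨h1, h2⟩]

lemma cpow_polar (w : ℂ) (hw : w ≠ 0) :
    w ^ (((2/7 : ℝ)) : ℂ)
      = ((Complex.abs w ^ ((2/7) : ℝ) : ℝ) : ℂ)
        * Complex.exp ((↑(2/7 * w.arg) : ℝ) * I) := by
  rw [Complex.cpow_def_of_ne_zero hw, Complex.log, ← Complex.abs_def w]
  rw [show (((Complex.abs w).log : ℂ) + (w.arg : ℂ) * I) * (((2/7 : ℝ)) : ℂ)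
      = ((2/7 * (Complex.abs w).log : ℝ) : ℂ) + ((2/7 * w.arg : ℝ) : ℂ) * I by push_cast; ring]
  rw [Complex.exp_add]
  congr 1
  rw [← Complex.ofReal_exp]
  congr 1
  rw [Real.rpow_def_of_pos (Complex.abs.pos hw)]
  ring_nf

lemma Hglobal {F : ℂ → ℂ} (hF : Differentiable ℂ F) (hrot : ∀ w, F (zt * w) = F w)
    {c7 K A rm : ℝ} (hc7 : 0 < c7) (hK : 0 < K) (hA : 0 ≤ A) (hrm : 1 ≤ rm)
    (hsec : ∀ r ψ : ℝ, rm ≤ r → 0 ≤ ψ → ψ ≤ Real.pi/7 →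
      Complex.abs (F ((r:ℂ) * Complex.exp ((ψ:ℂ) * I)))
        ≤ K * Real.exp (-(2*c7*r^7*|Real.cos (7*ψ)|) + A*r^5)) :
    ∀ z : ℂ, F z = 0 := by
  have hrotm : ∀ (m : ℕ) (w : ℂ), F (zt ^ m * w) = F w := by
    intro m
    induction m with
    | zero => intro w; simp
    | succ n ih =>
      intro w
      rw [show zt ^ (n+1) * w = zt * (zt ^ n * w) by rw [pow_succ]; ring, hrot, ih]
  set r2 : ℝ := max rm (max 1 (A / (2*c7))) with hr2
  have hr2m : rm ≤ r2 := le_max_left _ _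
  have hr21 : (1:ℝ) ≤ r2 := le_trans (le_max_left _ _) (le_max_right _ _)
  have hr2A : A / (2*c7) ≤ r2 := le_trans (le_max_right _ _) (le_max_right _ _)
  have hr20 : (0:ℝ) < r2 := lt_of_lt_of_le zero_lt_one hr21
  obtain ⟨M0, hM0⟩ := (isCompact_closedBall (0:ℂ) r2).exists_bound_of_continuousOn
    hF.continuous.continuousOn
  set M : ℝ := max M0 K with hM
  have hMK : K ≤ M := le_max_right _ _
  have hM0M : M0 ≤ M := le_max_left _ _
  have hball : ∀ w : ℂ, Complex.abs w ≤ r2 → Complex.abs (F w) ≤ M := by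
    intro w hw
    have hmem : w ∈ Metric.closedBall (0:ℂ) r2 := by
      simpa [Metric.mem_closedBall, Complex.dist_eq, Complex.abs_def] using hw
    exact le_trans (hM0 w hmem) hM0M
  have hexp_neg : ∀ r : ℝ, r2 ≤ r → -(2*c7*r^7) + A*r^5 ≤ 0 := by
    intro r hr
    have h1 : (1:ℝ) ≤ r := le_trans hr21 hr
    have h0 : (0:ℝ) ≤ r := by linarith
    have hA2 : A ≤ 2*c7*r := by
      have hle := le_trans hr2A hr
      calc A = (A / (2*c7)) * (2*c7) := by field_simp
      _ ≤ r * (2*c7) := mul_le_mul_of_nonneg_right hle (by linarith)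
      _ = 2*c7*r := by ring
    have e1 : A * r^5 ≤ 2*c7*r * r^5 := mul_le_mul_of_nonneg_right hA2 (pow_nonneg h0 5)
    have e3 : r^6 ≤ r^7 := pow_le_pow_right₀ h1 (by norm_num)
    nlinarith
  have hray : ∀ x : ℝ, 0 ≤ x → Complex.abs (F ((x:ℂ))) ≤ M := by
    intro x hx
    rcases le_or_gt x r2 with h | h
    · apply hball
      simpa [Complex.abs_ofReal, _root_.abs_of_nonneg hx] using h
    · have hxrm : rm ≤ x := le_trans hr2m h.le
      have h0 : (x:ℂ) = (x:ℂ) * Complex.exp (((0:ℝ):ℂ) * I) := by simp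
      rw [h0]
      refine le_trans (hsec x 0 hxrm le_rfl (by positivity)) ?_
      have hneg : -(2*c7*x^7*|Real.cos (7*0)|) + A*x^5 ≤ 0 := by
        have := hexp_neg x h.le
        norm_num
        linarith
      calc K * Real.exp (-(2*c7*x^7*|Real.cos (7*0)|) + A*x^5) ≤ K * 1 := by
            apply mul_le_mul_of_nonneg_left _ hK.le
            rw [Real.exp_le_one_iff]
            exact hneg
      _ = K := mul_one K
      _ ≤ M := hMK
  have hray7 : ∀ x : ℝ, 0 ≤ x →
      Complex.abs (F ((x:ℂ) * Complex.exp ((↑(Real.pi/7) : ℝ) * I))) ≤ M := by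
    intro x hx
    have heq : (x:ℂ) * Complex.exp ((↑(Real.pi/7) : ℝ) * I) = zt * (x:ℂ) := by
      rw [zt]; ring
    rw [heq, hrot]
    exact hray x hx
  set G : ℂ → ℂ := fun w => F (w ^ (((2/7:ℝ)) : ℂ)) with hG
  have hdc : DiffContOnCl ℂ G (Ioi 0 ×ℂ Ioi 0) := by
    constructor
    · intro w hw
      rw [Complex.mem_reProdIm] at hw
      apply DifferentiableAt.differentiableWithinAt
      exact (hF _).comp w (differentiableAt_id.cpow (differentiableAt_const _)
        (Complex.mem_slitPlane_iff.2 (Or.inl hw.1)))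
    · simp only [Complex.closure_reProdIm, closure_Ioi]
      intro w hw
      rw [Complex.mem_reProdIm] at hw
      apply ContinuousAt.continuousWithinAt
      exact (hF.continuous.continuousAt).comp
        (Complex.continuousAt_cpow_const_of_re_pos (Or.inl hw.1) (by norm_num))
  have habs10 : ∀ w : ℂ, w ≠ 0 → (Complex.abs w ^ ((2/7):ℝ)) ^ 5 = Complex.abs w ^ ((10/7 : ℝ)) := by
    intro w hw
    rw [← Real.rpow_natCast (Complex.abs w ^ ((2/7):ℝ)) 5, ← Real.rpow_mul (apply_nonneg _ _)]
    norm_num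
  have hquadmem : ∀ w : ℂ, w ∈ Ioi (0:ℝ) ×ℂ Ioi (0:ℝ) → w ≠ 0 ∧ 0 ≤ 2/7 * w.arg ∧ 2/7 * w.arg ≤ Real.pi/7 := by
    intro w hw
    rw [Complex.mem_reProdIm] at hw
    have hw0 : w ≠ 0 := by
      intro h
      rw [h] at hw
      exact lt_irrefl (0:ℝ) hw.1
    have ha1 : 0 ≤ w.arg := Complex.arg_nonneg_iff.2 (le_of_lt hw.2)
    have ha2 : w.arg ≤ Real.pi/2 := Complex.arg_le_pi_div_two_iff.2 (Or.inl (le_of_lt hw.1))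
    exact ⟨hw0, by linarith, by linarith⟩
  have hBig : G =O[Bornology.cobounded ℂ ⊓ 𝓟 (Ioi 0 ×ℂ Ioi 0)]
      fun w => Real.exp (A * Complex.abs w ^ (10/7 : ℝ)) := by
    apply Asymptotics.IsBigO.of_bound K
    rw [Filter.eventually_inf_principal]
    filter_upwards [eventually_cobounded_le_norm (rm ^ ((7:ℝ)/2))] with w hw hwq
    obtain ⟨hw0, hψ1, hψ2⟩ := hquadmem w hwq
    have hr' : rm ≤ Complex.abs w ^ ((2/7):ℝ) := by
      calc rm = (rm ^ ((7:ℝ)/2)) ^ ((2:ℝ)/7) := by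
            rw [← Real.rpow_mul (by linarith : (0:ℝ) ≤ rm)]
            norm_num
      _ ≤ (Complex.abs w) ^ ((2:ℝ)/7) := by
            apply Real.rpow_le_rpow (Real.rpow_nonneg (by linarith) _) _ (by norm_num)
            simpa [Complex.norm_eq_abs] using hw
    have hbd := hsec (Complex.abs w ^ ((2/7):ℝ)) (2/7 * w.arg) hr' hψ1 hψ2
    rw [← cpow_polar w hw0] at hbd
    have hle2 : Complex.abs (G w) ≤ K * Real.exp (A * Complex.abs w ^ ((10/7 : ℝ))) := by
      refine le_trans hbd ?_
      apply mul_le_mul_of_nonneg_left _ hK.le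
      apply Real.exp_le_exp.2
      rw [← habs10 w hw0]
      have hnn : 0 ≤ 2*c7*(Complex.abs w ^ ((2/7):ℝ))^7*|Real.cos (7*(2/7 * w.arg))| := by positivity
      linarith
    calc ‖G w‖ = Complex.abs (G w) := rfl
    _ ≤ K * Real.exp (A * Complex.abs w ^ ((10/7 : ℝ))) := hle2
    _ = K * ‖Real.exp (A * Complex.abs w ^ ((10/7 : ℝ)))‖ := by
        rw [Real.norm_of_nonneg (Real.exp_pos _).le]
  have hPL : ∀ w : ℂ, 0 ≤ w.re → 0 ≤ w.im → Complex.abs (G w) ≤ M := by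
    intro w h1 h2
    refine PhragmenLindelof.quadrant_I hdc ⟨10/7, by norm_num, A, hBig⟩ ?_ ?_ h1 h2
    · intro x hx
      show Complex.abs (F ((x:ℂ) ^ (((2/7:ℝ)) : ℂ))) ≤ M
      rw [← Complex.ofReal_cpow hx]
      exact hray _ (Real.rpow_nonneg hx _)
    · intro x hx
      rcases eq_or_lt_of_le hx with h0 | h0
      · rw [← h0]
        simp only [hG, Complex.ofReal_zero, zero_mul,
          Complex.zero_cpow (show (((2/7:ℝ)) : ℂ) ≠ 0 by norm_num)]
        exact hball 0 (by simp [hr20.le])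
      · have hw0 : (x:ℂ) * I ≠ 0 :=
          mul_ne_zero (Complex.ofReal_ne_zero.2 (ne_of_gt h0)) Complex.I_ne_zero
        simp only [hG]
        rw [cpow_polar _ hw0]
        have harg : ((x:ℂ) * I).arg = Real.pi/2 := by
          rw [Complex.arg_real_mul I h0]
          exact Complex.arg_I
        have habsxI : Complex.abs ((x:ℂ) * I) = x := by
          simp [Complex.abs_def, _root_.abs_of_nonneg hx]
        rw [harg, habsxI, show 2/7 * (Real.pi/2) = Real.pi/7 by ring]
        exact hray7 _ (Real.rpow_nonneg hx _)
  have hsector : ∀ r ψ : ℝ, 0 < r → 0 ≤ ψ → ψ ≤ Real.pi/7 →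
      Complex.abs (F ((r:ℂ) * Complex.exp ((ψ:ℂ) * I))) ≤ M := by
    intro r ψ hr h0 h7
    set w : ℂ := ((r ^ ((7:ℝ)/2) : ℝ) : ℂ) * Complex.exp ((↑(7*ψ/2) : ℝ) * I) with hw
    have hrp : 0 < r ^ ((7:ℝ)/2) := Real.rpow_pos_of_pos hr _
    have hwre : 0 ≤ w.re := by
      rw [hw, polar_re]
      apply mul_nonneg hrp.le
      apply Real.cos_nonneg_of_mem_Icc
      constructor
      · linarith [Real.pi_pos]
      · linarith [Real.pi_pos]
    have hwim : 0 ≤ w.im := by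
      rw [hw, polar_im]
      apply mul_nonneg hrp.le
      apply Real.sin_nonneg_of_nonneg_of_le_pi
      · linarith
      · linarith [Real.pi_pos]
    have habsw : Complex.abs w = r ^ ((7:ℝ)/2) := by rw [hw]; exact polar_abs hrp.le _
    have hw0 : w ≠ 0 := by
      intro h
      rw [h] at habsw
      simp at habsw
      linarith
    have harg : w.arg = 7*ψ/2 := by
      rw [hw]
      exact arg_polar hrp (by linarith [Real.pi_pos]) (by linarith [Real.pi_pos])
    have hwc : w ^ (((2/7:ℝ)) : ℂ) = (r:ℂ) * Complex.exp ((ψ:ℂ) * I) := by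
      rw [cpow_polar w hw0, habsw, harg]
      congr 2
      · rw [← Real.rpow_mul hr.le]
        norm_num
      · norm_num
        try ring
    have := hPL w hwre hwim
    simp only [hG] at this
    rw [hwc] at this
    exact this
  have hglob : ∀ z : ℂ, Complex.abs (F z) ≤ M := by
    intro z
    rcases eq_or_ne z 0 with rfl | hz
    · exact hball 0 (by simp [hr20.le])
    · obtain ⟨m, ψ, h0, h7, heq⟩ := exists_rot_sector z hz
      have habs0 : 0 < Complex.abs z := Complex.abs.pos hz
      calc Complex.abs (F z) = Complex.abs (F (zt ^ m * z)) := by rw [hrotm]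
      _ ≤ M := by
          rw [heq]
          exact hsector _ ψ habs0 h0 h7
  have hbdd : Bornology.IsBounded (range F) := by
    apply isBounded_iff_forall_norm_le.2 ⟨M, ?_⟩
    rintro y ⟨z, rfl⟩
    exact hglob z
  intro z
  have hcst : ∀ x : ℝ, F z = F ((x:ℂ)) := fun x => hF.apply_eq_apply_of_bounded hbdd z x
  have hlim : Tendsto (fun x : ℝ => K * Real.exp (-(c7 * x))) atTop (𝓝 0) := by
    have h1 : Tendsto (fun x : ℝ => c7 * x) atTop atTop :=
      Tendsto.const_mul_atTop hc7 tendsto_id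
    have h2 := Real.tendsto_exp_neg_atTop_nhds_zero.comp h1
    have h3 := h2.const_mul K
    simpa using h3
  have hev : ∀ᶠ x : ℝ in atTop, Complex.abs (F z) ≤ K * Real.exp (-(c7*x)) := by
    filter_upwards [eventually_ge_atTop (max r2 (A/c7))] with x hx
    have hx2 : r2 ≤ x := le_trans (le_max_left _ _) hx
    have hxA : A/c7 ≤ x := le_trans (le_max_right _ _) hx
    have hx1 : (1:ℝ) ≤ x := le_trans hr21 hx2
    have hx0 : (0:ℝ) ≤ x := by linarith
    rw [hcst x]
    have hxc : (x:ℂ) = (x:ℂ) * Complex.exp (((0:ℝ):ℂ) * I) := by simp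
    rw [hxc]
    refine le_trans (hsec x 0 (le_trans hr2m hx2) le_rfl (by positivity)) ?_
    apply mul_le_mul_of_nonneg_left _ hK.le
    apply Real.exp_le_exp.2
    have hA3 : A ≤ c7 * x := by
      calc A = (A / c7) * c7 := by field_simp
      _ ≤ x * c7 := mul_le_mul_of_nonneg_right hxA hc7.le
      _ = c7 * x := by ring
    have e1 : A * x^5 ≤ c7*x * x^5 := mul_le_mul_of_nonneg_right hA3 (pow_nonneg hx0 5)
    have e3 : x^6 ≤ x^7 := pow_le_pow_right₀ hx1 (by norm_num)
    have e4 : x ≤ x^7 := le_self_pow₀ hx1 (by norm_num)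
    have hcos0 : |Real.cos (7*(0:ℝ))| = 1 := by norm_num
    rw [hcos0]
    nlinarith
  have hle0 : Complex.abs (F z) ≤ 0 := ge_of_tendsto hlim hev
  have : Complex.abs (F z) = 0 := le_antisymm hle0 (apply_nonneg _ _)
  exact Complex.abs.eq_zero.1 this

lemma Hf_diff {f : ℂ → ℂ} (hf : Differentiable ℂ f) : Differentiable ℂ (Hf f) := by
  unfold Hf
  apply Differentiable.fun_finsetProd
  intro k _
  exact hf.comp ((differentiable_id.const_mul (zt ^ k)).pow 2)

end Prop65

open Prop65 in
/-- Proposition 6.5: an entire function bounded by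
`C |μ|^{-3/4} exp(Re θ(μ))` off the cut `(-∞,0]`, where
`θ(μ) = c7 μ^{7/2} + c5 μ^{5/2} + c3 μ^{3/2} + c1 μ^{1/2}` with `c7 > 0`,
vanishes identically. -/
theorem entire_function_vanishes
    (c7 c5 c3 c1 : ℝ) (hc7 : 0 < c7)
    (f : ℂ → ℂ) (hf : Differentiable ℂ f)
    (C R : ℝ) (hC : 0 < C) (hR : 1 ≤ R)
    (hbound : ∀ μ : ℂ, μ ∉ (fun r : ℝ => (r : ℂ)) '' Iic 0 → R ≤ ‖μ‖ →
      ‖f μ‖ ≤ C * (‖μ‖) ^ (-(3 / 4) : ℝ) *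
        Real.exp (((c7 : ℂ) * μ ^ ((7 : ℂ) / 2) + (c5 : ℂ) * μ ^ ((5 : ℂ) / 2)
          + (c3 : ℂ) * μ ^ ((3 : ℂ) / 2) + (c1 : ℂ) * μ ^ ((1 : ℂ) / 2)).re)) :
    ∀ μ : ℂ, f μ = 0 := by
  have hfc : Continuous f := hf.continuous
  have hrm1 : (1:ℝ) ≤ max (Real.sqrt R) 1 := le_max_right _ _
  -- the sector bound for `Hf f`
  have hsec0 := sector_bound (rm := max (Real.sqrt R) 1) hC
    (hfb_pos hR hbound hC hfc) (hfb_neg hR hbound hC hfc)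
  have hsec : ∀ r ψ : ℝ, max (Real.sqrt R) 1 ≤ r → 0 ≤ ψ → ψ ≤ Real.pi/7 →
      Complex.abs (Hf f ((r:ℂ) * Complex.exp ((ψ:ℂ) * I)))
        ≤ C^14 * Real.exp (-(2*c7*r^7*|Real.cos (7*ψ)|) + (14*(|c5|+|c3|+|c1|))*r^5) := by
    intro r ψ h1 h2 h3
    have := hsec0 r ψ h1 h2 h3
    rw [show (14*(|c5|+|c3|+|c1|))*r^5 = 14*((|c5|+|c3|+|c1|)*r^5) by ring]
    exact this
  -- `Hf f` vanishes identically
  have hH0 : ∀ z : ℂ, Hf f z = 0 :=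
    Hglobal (Hf_diff hf) (Hf_rot f) hc7 (pow_pos hC 14) (by positivity) hrm1 hsec
  -- Baire category: one of the rotated factors vanishes on a set with interior
  set g : Fin 14 → ℂ → ℂ := fun k z => f ((zt ^ (k:ℕ) * z) ^ 2) with hg
  have hgd : ∀ k, Differentiable ℂ (g k) := fun k =>
    hf.comp ((differentiable_id.const_mul (zt ^ (k:ℕ))).pow 2)
  have hcover : (⋃ k : Fin 14, {z | g k z = 0}) = univ := by
    ext z
    simp only [mem_iUnion, mem_univ, iff_true, mem_setOf_eq]
    have hz := hH0 z
    rw [Hf] at hz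
    obtain ⟨a, ha, haz⟩ := Finset.prod_eq_zero_iff.1 hz
    exact ⟨⟨a, Finset.mem_range.1 ha⟩, haz⟩
  obtain ⟨k, hk⟩ := nonempty_interior_of_iUnion_of_closed
    (fun k : Fin 14 => isClosed_eq (hgd k).continuous continuous_const) hcover
  obtain ⟨w0, hw0⟩ := hk
  have hev : g k =ᶠ[nhds w0] 0 := by
    have hmem : {z | g k z = 0} ∈ nhds w0 := mem_interior_iff_mem_nhds.1 hw0
    filter_upwards [hmem] with z hz using hz
  have hzero : ∀ z, g k z = 0 := by
    have han : AnalyticOnNhd ℂ (g k) univ :=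
      DifferentiableOn.analyticOnNhd (fun x _ => ((hgd k) x).differentiableWithinAt) isOpen_univ
    have heq := han.eqOn_zero_of_preconnected_of_eventuallyEq_zero isPreconnected_univ
      (mem_univ w0) hev
    intro z
    exact heq (mem_univ z)
  intro μ
  have hs2 : (μ ^ (((2:ℕ) : ℂ))⁻¹) ^ 2 = μ := Complex.cpow_nat_inv_pow μ two_ne_zero
  have hzt0 : zt ^ (k:ℕ) ≠ 0 := pow_ne_zero _ (Complex.exp_ne_zero _)
  have hfin := hzero ((zt ^ (k:ℕ))⁻¹ * (μ ^ (((2:ℕ) : ℂ))⁻¹))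
  simp only [hg] at hfin
  rw [show zt ^ (k:ℕ) * ((zt ^ (k:ℕ))⁻¹ * (μ ^ (((2:ℕ) : ℂ))⁻¹)) = μ ^ (((2:ℕ) : ℂ))⁻¹ by
      field_simp, hs2] at hfin
  exact hfin
end

section
/- (Diagonal identities for the left transformation kernel; used in the proofs of Lemmas 4.7 and 4.11.) Let ũ : ℝ → ℝ be continuous with compact support and let L : ℝ² → ℝ be continuously differentiable and satisfy, for all (x,y) ∈ ℝ², the integral equation L(x,y) = −∫_{−∞}^{(x+y)/2} ũ(s) ds − 2 ∫_{−∞}^{(x+y)/2} ( ∫_{0}^{(x−y)/2} ũ(α+β) L(α+β, α−β) dβ ) dα. Then for every x ∈ ℝ: (i) L(x,x) = −∫_{−∞}^{x} ũ(s) ds; (ii) (∂₁L + ∂₂L)(x,x) = −ũ(x). If moreover ũ is continuously differentiable and L is twice continuously differentiable, then also (iii) (∂₁∂₂L + ∂₂∂₂L)(x,x) = −(1/2) ũ'(x) − ũ(x) ∫_{−∞}^{x} ũ(s) ds. -/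
open MeasureTheory Set intervalIntegral

/-- Derivative of a function of two variables along a horizontal line. -/
lemma hd_left' {f : ℝ × ℝ → ℝ} {x y : ℝ} (hf : DifferentiableAt ℝ f (x, y)) :
    HasDerivAt (fun w => f (w, y)) (fderiv ℝ f (x, y) (1, 0)) x := by
  have h1 : HasDerivAt (fun w : ℝ => (w, y)) ((1 : ℝ), (0 : ℝ)) x :=
    HasDerivAt.prodMk (hasDerivAt_id x) (hasDerivAt_const x y)
  exact HasFDerivAt.comp_hasDerivAt x hf.hasFDerivAt h1

/-- Derivative of a function of two variables along a vertical line. -/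
lemma hd_right' {f : ℝ × ℝ → ℝ} {x y : ℝ} (hf : DifferentiableAt ℝ f (x, y)) :
    HasDerivAt (fun w => f (x, w)) (fderiv ℝ f (x, y) (0, 1)) y := by
  have h1 : HasDerivAt (fun w : ℝ => (x, w)) ((0 : ℝ), (1 : ℝ)) y :=
    HasDerivAt.prodMk (hasDerivAt_const y x) (hasDerivAt_id y)
  exact HasFDerivAt.comp_hasDerivAt y hf.hasFDerivAt h1

/-- Derivative of a function of two variables along the diagonal. -/
lemma hd_diag' {f : ℝ × ℝ → ℝ} {x : ℝ} (hf : DifferentiableAt ℝ f (x, x)) :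
    HasDerivAt (fun w => f (w, w)) (fderiv ℝ f (x, x) (1, 1)) x := by
  have h1 : HasDerivAt (fun w : ℝ => (w, w)) ((1 : ℝ), (1 : ℝ)) x :=
    HasDerivAt.prodMk (hasDerivAt_id x) (hasDerivAt_id x)
  exact HasFDerivAt.comp_hasDerivAt x hf.hasFDerivAt h1

/-- Derivative of a function of two variables along the anti-diagonal. -/
lemma hd_anti' {f : ℝ × ℝ → ℝ} {x : ℝ} (hf : DifferentiableAt ℝ f (x, x)) :
    HasDerivAt (fun t => f (x + t, x - t)) (fderiv ℝ f (x, x) (1, -1)) 0 := by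
  have h1 : HasDerivAt (fun t : ℝ => (x + t, x - t)) ((1 : ℝ), (-1 : ℝ)) 0 :=
    HasDerivAt.prodMk ((hasDerivAt_id (0:ℝ)).const_add x) ((hasDerivAt_id (0:ℝ)).const_sub x)
  have h2 := hf.hasFDerivAt
  rw [show ((x:ℝ), x) = (x + 0, x - 0) by simp] at h2
  have h3 := HasFDerivAt.comp_hasDerivAt 0 h2 h1
  simpa [Function.comp_def] using h3

/-- Fundamental theorem of calculus for the cumulative integral of a compactly
supported continuous function. -/
lemma hd_cumul' {u : ℝ → ℝ} (hu : Continuous u) (hsupp : HasCompactSupport u) (w : ℝ) :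
    HasDerivAt (fun w => ∫ s in Iic w, u s) (u w) w := by
  have hi : Integrable u := hu.integrable_of_hasCompactSupport hsupp
  have key : ∀ v : ℝ, ∫ s in Iic v, u s = (∫ s in Iic (0:ℝ), u s) + ∫ s in (0:ℝ)..v, u s := by
    intro v
    rw [← integral_Iic_sub_Iic hi.integrableOn hi.integrableOn]; ring
  have h : HasDerivAt (fun v => (∫ s in Iic (0:ℝ), u s) + ∫ s in (0:ℝ)..v, u s) (u w) w :=
    (intervalIntegral.integral_hasDerivAt_right (hu.intervalIntegrable 0 w)
      (hu.stronglyMeasurableAtFilter _ _) hu.continuousAt).const_add _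
  exact h.congr_of_eventuallyEq (Filter.Eventually.of_forall fun v => (key v))

lemma F_cont' {u : ℝ → ℝ} (hu : Continuous u) (hsupp : HasCompactSupport u) :
    Continuous (fun w => ∫ s in Iic w, u s) :=
  continuous_iff_continuousAt.2 fun w => (hd_cumul' hu hsupp w).continuousAt

lemma supp_radius' {u : ℝ → ℝ} (hsupp : HasCompactSupport u) :
    ∃ R : ℝ, 0 ≤ R ∧ ∀ s : ℝ, R < |s| → u s = 0 := by
  obtain ⟨R, hR⟩ := hsupp.isCompact.isBounded.subset_closedBall 0
  refine ⟨max R 0, le_max_right _ _, fun s hs => ?_⟩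
  apply image_eq_zero_of_notMem_tsupport
  intro hmem
  have := hR hmem
  rw [Metric.mem_closedBall, Real.dist_eq, sub_zero] at this
  have : |s| ≤ max R 0 := le_max_of_le_left this
  linarith

lemma F_zero' {u : ℝ → ℝ} {R : ℝ} (hR : ∀ s : ℝ, R < |s| → u s = 0)
    (hR0 : 0 ≤ R) {w : ℝ} (hw : w ≤ -R - 1) : (∫ s in Iic w, u s) = 0 := by
  rw [setIntegral_congr_fun measurableSet_Iic (g := fun _ => (0:ℝ))]
  · simp
  · intro s hs
    apply hR
    have : s ≤ -R - 1 := le_trans hs hw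
    rw [abs_of_nonpos (by linarith)]
    linarith

lemma uF_integral' {u : ℝ → ℝ} (hu : Continuous u) (hsupp : HasCompactSupport u) (x : ℝ) :
    ∫ w in Iic x, 2 * (u w * ∫ s in Iic w, u s) = (∫ s in Iic x, u s) ^ 2 := by
  set F : ℝ → ℝ := fun w => ∫ s in Iic w, u s with hF
  obtain ⟨R, hR0, hR⟩ := supp_radius' hsupp
  have hFc : Continuous F := F_cont' hu hsupp
  have hderiv : ∀ w ∈ Iic x, HasDerivAt (fun w => F w ^ 2) (2 * (u w * F w)) w := by
    intro w _
    have h := (hd_cumul' hu hsupp w).pow 2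
    refine h.congr_deriv ?_
    push_cast
    ring
  have hCS : HasCompactSupport (fun w => 2 * (u w * F w)) := by
    apply HasCompactSupport.mul_left
    exact hsupp.mul_right
  have hint : IntegrableOn (fun w => 2 * (u w * F w)) (Iic x) :=
    ((continuous_const.mul (hu.mul hFc)).integrable_of_hasCompactSupport hCS).integrableOn
  have htend : Filter.Tendsto (fun w => F w ^ 2) Filter.atBot (nhds 0) := by
    apply Filter.Tendsto.congr' _ tendsto_const_nhds
    filter_upwards [Filter.Iic_mem_atBot (-R - 1)] with w hw
    rw [hF]
    simp only
    rw [F_zero' hR hR0 hw]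
    norm_num
  have := integral_Iic_of_hasDerivAt_of_tendsto' hderiv hint htend
  simpa using this

/-- Derivative at `t = 0` of the double integral appearing in the integral equation,
along the anti-diagonal. -/
lemma inner_hasDerivAt (u : ℝ → ℝ) (hu : Continuous u) (hsupp : HasCompactSupport u)
    (L : ℝ × ℝ → ℝ) (hL : Continuous L) (x : ℝ) :
    HasDerivAt (fun t => ∫ α in Iic x, ∫ β in (0:ℝ)..t, u (α + β) * L (α + β, α - β))
      (∫ α in Iic x, u α * L (α, α)) 0 := by
  set φ : ℝ × ℝ → ℝ := fun p => u (p.1 + p.2) * L (p.1 + p.2, p.1 - p.2) with hφ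
  have hφc : Continuous φ := by
    apply Continuous.mul
    · exact hu.comp (continuous_fst.add continuous_snd)
    · exact hL.comp ((continuous_fst.add continuous_snd).prodMk
        (continuous_fst.sub continuous_snd))
  obtain ⟨R, hR0, hR⟩ := supp_radius' hsupp
  obtain ⟨C, hC⟩ : ∃ C : ℝ, ∀ p ∈ Icc (-(R+2)) (R+2) ×ˢ Icc (-1:ℝ) 1, ‖φ p‖ ≤ C := by
    rcases (isCompact_Icc.prod isCompact_Icc).exists_bound_of_continuousOn
      hφc.continuousOn with ⟨C, hC⟩
    exact ⟨C, hC⟩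
  set B : ℝ → ℝ := indicator (Icc (-(R+2)) (R+2)) (fun _ => max C 0) with hB
  have hBint : Integrable B (volume.restrict (Iic x)) := by
    apply Integrable.restrict
    rw [hB, integrable_indicator_iff measurableSet_Icc]
    exact integrableOn_const measure_Icc_lt_top.ne
  have key := _root_.hasDerivAt_integral_of_dominated_loc_of_deriv_le
    (F := fun t α => ∫ β in (0:ℝ)..t, φ (α, β)) (F' := fun t α => φ (α, t))
    (x₀ := (0:ℝ)) (s := Metric.ball (0:ℝ) 1) (μ := volume.restrict (Iic x)) (bound := B)
    (Metric.ball_mem_nhds _ one_pos) ?_ ?_ ?_ ?_ hBint ?_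
  · have h2 := key.2
    have hval : (∫ α in Iic x, φ (α, 0)) = ∫ α in Iic x, u α * L (α, α) := by
      apply MeasureTheory.integral_congr_ae
      filter_upwards with α
      simp [hφ]
    beta_reduce at h2
    rw [hval] at h2
    exact h2
  · apply Filter.Eventually.of_forall
    intro t
    exact (intervalIntegral.continuous_parametric_intervalIntegral_of_continuous'
      (by exact hφc.comp (continuous_fst.prodMk continuous_snd) : Continuous
        (Function.uncurry (fun α β => φ (α, β)))) 0 t).aestronglyMeasurable
  · simp only [intervalIntegral.integral_same]
    exact integrable_zero _ _ _
  · exact (hφc.comp (continuous_id.prodMk continuous_const)).aestronglyMeasurable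
  · apply Filter.Eventually.of_forall
    intro α t ht
    rw [Metric.mem_ball, Real.dist_eq, sub_zero] at ht
    by_cases hα : α ∈ Icc (-(R+2)) (R+2)
    · have : B α = max C 0 := by rw [hB, indicator_of_mem hα]
      rw [this]
      refine le_trans (hC (α, t) ⟨hα, ?_⟩) (le_max_left _ _)
      constructor <;> [linarith [abs_nonneg t, neg_abs_le t]; linarith [le_abs_self t]]
    · have hBα : B α = 0 := by rw [hB, indicator_of_notMem hα]
      rw [hBα]
      have : u (α + t) = 0 := by
        apply hR
        rw [mem_Icc, not_and_or, not_le, not_le] at hα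
        have hα2 : R + 2 < |α| := by
          rcases hα with h | h
          · rw [abs_of_nonpos (by linarith)]; linarith
          · rw [abs_of_nonneg (by linarith)]; linarith
        have h3 : |α| ≤ |α + t| + |t| := by
          calc |α| = |α + t + -t| := by ring_nf
          _ ≤ |α + t| + |-t| := abs_add_le _ _
          _ = |α + t| + |t| := by rw [abs_neg]
        linarith
      simp [hφ, this]
  · apply Filter.Eventually.of_forall
    intro α t _
    exact intervalIntegral.integral_hasDerivAt_right
      ((hφc.comp (continuous_const.prodMk continuous_id)).intervalIntegrable 0 t)
      ((hφc.comp (continuous_const.prodMk continuous_id)).stronglyMeasurableAtFilter _ _)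
      (hφc.comp (continuous_const.prodMk continuous_id)).continuousAt

/-- Diagonal identities for the left transformation kernel `L(x,y)`
satisfying the integral equation (4.11)
(used in the proofs of Lemmas 4.7 and 4.11). -/
theorem left_kernel_diagonal_identities
    (u : ℝ → ℝ) (hu : Continuous u) (hsupp : HasCompactSupport u)
    (L : ℝ × ℝ → ℝ) (hL : ContDiff ℝ 1 L)
    (heq : ∀ x y : ℝ, L (x, y) =
      -(∫ s in Iic ((x + y) / 2), u s)
      - 2 * ∫ α in Iic ((x + y) / 2),
          (∫ β in (0 : ℝ)..((x - y) / 2), u (α + β) * L (α + β, α - β))) :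
    (∀ x : ℝ, L (x, x) = -(∫ s in Iic x, u s)) ∧
    (∀ x : ℝ,
      deriv (fun x' => L (x', x)) x + deriv (fun y' => L (x, y')) x = -u x) ∧
    (ContDiff ℝ 1 u → ContDiff ℝ 2 L → ∀ x : ℝ,
      deriv (fun x' => deriv (fun y' => L (x', y')) x) x
        + deriv (fun y' => deriv (fun y'' => L (x, y'')) y') x
      = -(1 / 2) * deriv u x - u x * ∫ s in Iic x, u s) := by
  set F : ℝ → ℝ := fun w => ∫ s in Iic w, u s with hFdef
  have hLd : Differentiable ℝ L := hL.differentiable one_ne_zero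
  -- Part (i)
  have part1 : ∀ x : ℝ, L (x, x) = -(∫ s in Iic x, u s) := by
    intro x
    have h := heq x x
    simpa [add_self_div_two, sub_self] using h
  -- derivative along the diagonal
  have diag_fderiv : ∀ x : ℝ, fderiv ℝ L (x, x) (1, 1) = -u x := by
    intro x
    have h1 : HasDerivAt (fun w => L (w, w)) (fderiv ℝ L (x, x) (1, 1)) x :=
      hd_diag' (hLd _)
    have h2 : HasDerivAt (fun w => -F w) (-u x) x := (hd_cumul' hu hsupp x).neg
    have h3 : HasDerivAt (fun w => L (w, w)) (-u x) x :=
      h2.congr_of_eventuallyEq (Filter.Eventually.of_forall fun w => (part1 w))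
    exact h1.unique h3
  -- derivative along the anti-diagonal
  have anti_fderiv : ∀ x : ℝ, fderiv ℝ L (x, x) (1, -1) = (F x) ^ 2 := by
    intro x
    have h1 : HasDerivAt (fun t => L (x + t, x - t)) (fderiv ℝ L (x, x) (1, -1)) 0 :=
      hd_anti' (hLd _)
    have hI := inner_hasDerivAt u hu hsupp L hL.continuous x
    have h2 : HasDerivAt
        (fun t => -(F x) - 2 * ∫ α in Iic x, ∫ β in (0:ℝ)..t, u (α + β) * L (α + β, α - β))
        (-(2 * ∫ α in Iic x, u α * L (α, α))) 0 := by
      have hbase := ((hI.const_mul (2:ℝ)).neg).const_add (-(F x))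
      exact hbase.congr_of_eventuallyEq (Filter.Eventually.of_forall fun t => by simp only [Pi.neg_apply]; ring)
    have hkey : ∀ t : ℝ, L (x + t, x - t)
        = -(F x) - 2 * ∫ α in Iic x, ∫ β in (0:ℝ)..t, u (α + β) * L (α + β, α - β) := by
      intro t
      have h := heq (x + t) (x - t)
      rw [show (x + t + (x - t)) / 2 = x by ring, show (x + t - (x - t)) / 2 = t by ring] at h
      exact h
    have h3 : HasDerivAt (fun t => L (x + t, x - t))
        (-(2 * ∫ α in Iic x, u α * L (α, α))) 0 :=
      h2.congr_of_eventuallyEq (Filter.Eventually.of_forall fun t => (hkey t))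
    have h4 := h1.unique h3
    rw [h4]
    have h5 : (∫ α in Iic x, u α * L (α, α)) = ∫ α in Iic x, -(u α * F α) := by
      apply MeasureTheory.integral_congr_ae
      filter_upwards with α
      rw [part1 α]; ring
    rw [h5, MeasureTheory.integral_neg]
    have h6 := uF_integral' hu hsupp x
    rw [MeasureTheory.integral_const_mul] at h6
    simp only [hFdef]
    linarith [h6]
  -- the second partial derivative on the diagonal
  have pd2_diag : ∀ x : ℝ, fderiv ℝ L (x, x) (0, 1) = (-u x - (F x) ^ 2) / 2 := by
    intro x
    have hmap : fderiv ℝ L (x, x) (1, 1) - fderiv ℝ L (x, x) (1, -1)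
        = 2 * fderiv ℝ L (x, x) (0, 1) := by
      rw [← ContinuousLinearMap.map_sub]
      have : ((1:ℝ), (1:ℝ)) - (1, -1) = (2:ℝ) • ((0:ℝ), (1:ℝ)) := by
        simp [Prod.ext_iff]; norm_num
      rw [this, ContinuousLinearMap.map_smul]
      simp
    rw [diag_fderiv x, anti_fderiv x] at hmap
    linarith
  refine ⟨part1, ?_, ?_⟩
  · -- Part (ii)
    intro x
    have h1 : deriv (fun x' => L (x', x)) x = fderiv ℝ L (x, x) (1, 0) :=
      (hd_left' (hLd _)).deriv
    have h2 : deriv (fun y' => L (x, y')) x = fderiv ℝ L (x, x) (0, 1) :=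
      (hd_right' (hLd _)).deriv
    rw [h1, h2, ← ContinuousLinearMap.map_add]
    have : ((1:ℝ), (0:ℝ)) + (0, 1) = ((1:ℝ), (1:ℝ)) := by simp
    rw [this, diag_fderiv x]
  · -- Part (iii)
    intro hu1 hL2 x
    set M : ℝ × ℝ → ℝ := fun p => fderiv ℝ L p (0, 1) with hMdef
    have hM : ContDiff ℝ 1 M := by
      have h := (hL2.fderiv_right (m := 1) (by norm_num))
      exact h.clm_apply contDiff_const
    have hMd : Differentiable ℝ M := hM.differentiable one_ne_zero
    -- diagonal values of M
    have hMdiag : ∀ w : ℝ, M (w, w) = (-u w - (F w) ^ 2) / 2 := fun w => pd2_diag w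
    -- derivative of the diagonal of M
    have hdM : HasDerivAt (fun w => M (w, w)) (fderiv ℝ M (x, x) (1, 1)) x :=
      hd_diag' (hMd _)
    have hrhs : HasDerivAt (fun w => (-u w - (F w) ^ 2) / 2)
        ((-(deriv u x) - 2 * (F x) * u x) / 2) x := by
      have hu' : HasDerivAt u (deriv u x) x :=
        ((hu1.differentiable one_ne_zero) x).hasDerivAt
      have hF' : HasDerivAt F (u x) x := hd_cumul' hu hsupp x
      have hF2 : HasDerivAt (fun w => (F w) ^ 2) (2 * F x * u x) x := by
        have := hF'.pow 2
        refine this.congr_deriv ?_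
        push_cast; ring
      exact (hu'.neg.sub hF2).div_const 2
    have hdM2 : HasDerivAt (fun w => M (w, w)) ((-(deriv u x) - 2 * (F x) * u x) / 2) x :=
      hrhs.congr_of_eventuallyEq (Filter.Eventually.of_forall fun w => (hMdiag w))
    have hMsum : fderiv ℝ M (x, x) (1, 1) = (-(deriv u x) - 2 * (F x) * u x) / 2 :=
      hdM.unique hdM2
    -- identify the two terms in the statement
    have t1 : (fun x' => deriv (fun y' => L (x', y')) x) = fun x' => M (x', x) := by
      funext x'
      exact (hd_right' (hLd (x', x))).deriv
    have t2 : (fun y' => deriv (fun y'' => L (x, y'')) y') = fun y' => M (x, y') := by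
      funext y'
      exact (hd_right' (hLd (x, y'))).deriv
    rw [t1, t2]
    have h1 : deriv (fun x' => M (x', x)) x = fderiv ℝ M (x, x) (1, 0) :=
      (hd_left' (hMd _)).deriv
    have h2 : deriv (fun y' => M (x, y')) x = fderiv ℝ M (x, x) (0, 1) :=
      (hd_right' (hMd _)).deriv
    rw [h1, h2, ← ContinuousLinearMap.map_add]
    have : ((1:ℝ), (0:ℝ)) + (0, 1) = ((1:ℝ), (1:ℝ)) := by simp
    rw [this, hMsum]
    ring
end

section
/- (Diagonal identities for the right transformation kernel; used in the proofs of Lemmas 4.7 and 4.11.) Let ũ : ℝ → ℝ be continuous with compact support and let R : ℝ² → ℝ be continuously differentiable and satisfy, for all (x,y) ∈ ℝ², the integral equation R(x,y) = ∫_{(x+y)/2}^{+∞} ũ(s) ds − 2 ∫_{(x+y)/2}^{+∞} ( ∫_{0}^{(y−x)/2} ũ(α−β) R(α−β, α+β) dβ ) dα. Then for every x ∈ ℝ: (i) R(x,x) = ∫_{x}^{+∞} ũ(s) ds; (ii) (∂₁R + ∂₂R)(x,x) = −ũ(x). -/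
open MeasureTheory Set intervalIntegral

/-- Diagonal identities for the right transformation kernel `R(x,y)`
satisfying the integral equation (4.11)
(used in the proofs of Lemmas 4.7 and 4.11). -/
theorem right_kernel_diagonal_identities
    (u : ℝ → ℝ) (hu : Continuous u) (hsupp : HasCompactSupport u)
    (R : ℝ × ℝ → ℝ) (hR : ContDiff ℝ 1 R)
    (heq : ∀ x y : ℝ, R (x, y) =
      (∫ s in Ici ((x + y) / 2), u s)
      - 2 * ∫ α in Ici ((x + y) / 2),
          (∫ β in (0 : ℝ)..((y - x) / 2), u (α - β) * R (α - β, α + β))) :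
    (∀ x : ℝ, R (x, x) = ∫ s in Ici x, u s) ∧
    (∀ x : ℝ,
      deriv (fun x' => R (x', x)) x + deriv (fun y' => R (x, y')) x = -u x) := by
  have hdiag : ∀ x : ℝ, R (x, x) = ∫ s in Ici x, u s := by
    intro x
    have h := heq x x
    have h0 : (x - x) / 2 = (0:ℝ) := by ring
    have h1 : (x + x) / 2 = x := by ring
    rw [h0, h1] at h
    simpa using h
  refine ⟨hdiag, ?_⟩
  intro x
  -- a bound beyond which u vanishes
  obtain ⟨b, hb⟩ := hsupp.isCompact.bddAbove
  have hzero : ∀ s : ℝ, b < s → u s = 0 := by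
    intro s hs
    by_contra hne
    exact absurd (hb (subset_tsupport u hne)) (not_le.mpr hs)
  -- rewrite the Ici integral as an interval integral
  have key : ∀ t : ℝ, (∫ s in Ici t, u s) = ∫ s in t..b, u s := by
    intro t
    have hind : u = (Iic b).indicator u := by
      funext s
      by_cases hs : s ≤ b
      · simp [indicator, hs]
      · simp [indicator, hs, hzero s (not_le.mp hs)]
    have h1 : (∫ s in Ici t, u s) = ∫ s in Ici t ∩ Iic b, u s := by
      conv_lhs => rw [hind]
      exact setIntegral_indicator measurableSet_Iic
    rw [h1, Ici_inter_Iic]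
    by_cases htb : t ≤ b
    · rw [integral_Icc_eq_integral_Ioc, ← intervalIntegral.integral_of_le htb]
    · have hbt : b ≤ t := le_of_lt (not_le.mp htb)
      rw [Icc_eq_empty htb]
      rw [intervalIntegral.integral_of_ge hbt]
      have : (∫ s in Ioc b t, u s) = 0 := by
        apply setIntegral_eq_zero_of_forall_eq_zero
        intro s hs
        exact hzero s hs.1
      simp [this]
  -- derivative of the tail integral
  have hF : HasDerivAt (fun t : ℝ => ∫ s in Ici t, u s) (-u x) x := by
    have hright : HasDerivAt (fun t : ℝ => ∫ s in b..t, u s) (u x) x :=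
      intervalIntegral.integral_hasDerivAt_right (hu.intervalIntegrable b x)
        (hu.stronglyMeasurable.stronglyMeasurableAtFilter) hu.continuousAt
    have : HasDerivAt (fun t : ℝ => -∫ s in b..t, u s) (-u x) x := hright.neg
    have heqf : (fun t : ℝ => ∫ s in Ici t, u s) = fun t : ℝ => -∫ s in b..t, u s := by
      funext t
      rw [key t, intervalIntegral.integral_symm]
    rw [heqf]
    exact this
  -- chain rule at the diagonal
  have hRd := (hR.differentiable one_ne_zero (x, x)).hasFDerivAt
  set f := fderiv ℝ R (x, x) with hf
  have hgx : HasDerivAt (fun t : ℝ => (t, x)) ((1 : ℝ), (0 : ℝ)) x :=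
    HasDerivAt.prodMk (hasDerivAt_id x) (hasDerivAt_const x x)
  have hgy : HasDerivAt (fun t : ℝ => (x, t)) ((0 : ℝ), (1 : ℝ)) x :=
    HasDerivAt.prodMk (hasDerivAt_const x x) (hasDerivAt_id x)
  have hgd : HasDerivAt (fun t : ℝ => (t, t)) ((1 : ℝ), (1 : ℝ)) x :=
    HasDerivAt.prodMk (hasDerivAt_id x) (hasDerivAt_id x)
  have hx0 := hRd.comp_hasDerivAt_of_eq x hgx rfl
  have hx : HasDerivAt (fun t : ℝ => R (t, x)) (f (1, 0)) x := hx0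
  have hy0 := hRd.comp_hasDerivAt_of_eq x hgy rfl
  have hy : HasDerivAt (fun t : ℝ => R (x, t)) (f (0, 1)) x := hy0
  have hd0 := hRd.comp_hasDerivAt_of_eq x hgd rfl
  have hd : HasDerivAt (fun t : ℝ => R (t, t)) (f (1, 1)) x := hd0
  have hd' : HasDerivAt (fun t : ℝ => R (t, t)) (-u x) x := by
    have heqf : (fun t : ℝ => R (t, t)) = fun t : ℝ => ∫ s in Ici t, u s := by
      funext t; exact hdiag t
    rw [heqf]
    exact hF
  have hsum : f (1, 1) = -u x := hd.unique hd'
  rw [hx.deriv, hy.deriv, ← hsum]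
  have : ((1 : ℝ), (1 : ℝ)) = ((1 : ℝ), (0 : ℝ)) + ((0 : ℝ), (1 : ℝ)) := by simp
  rw [this, map_add]
end

section
/- (Expansion of the g-function at infinity, from the proof of Lemma 2.7.) Let t, x ∈ ℝ and let λ0 ∈ ℝ satisfy the cubic equation λ0³ − 24 t λ0 + 48 x = 0. Define, with principal branch powers, g(λ) = (1/105)(λ−λ0)^{7/2} + (λ0/30)(λ−λ0)^{5/2} + ((λ0² − 8t)/24)(λ−λ0)^{3/2} for λ with λ − λ0 ∉ (−∞,0], and θ(λ) = (1/105) λ^{7/2} − (t/3) λ^{3/2} + x λ^{1/2} for λ ∈ ℂ ∖ (−∞,0]. Let h1 = λ0⁴/128 − t λ0²/8. Then there exist constants C > 0 and R > |λ0| + 1 such that for every λ ∉ (−∞,0] with |λ| ≥ R one has | g(λ) − θ(λ) − h1 λ^{−1/2} | ≤ C |λ|^{−3/2}; that is, g(λ) − θ(λ) = h1/√λ + O(λ^{−3/2}) as λ → ∞ off the cut (−∞,0]. -/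
open Complex Set

lemma sqrt_facts' (z : ℂ) (hz : 0 < z.re ∨ z.im ≠ 0) :
    (z ^ ((1:ℂ)/2)) ^ 2 = z ∧ 0 < (z ^ ((1:ℂ)/2)).re ∧
    (0 ≤ z.im → 0 ≤ (z ^ ((1:ℂ)/2)).im) ∧ (z.im ≤ 0 → (z ^ ((1:ℂ)/2)).im ≤ 0) := by
  have hz0 : z ≠ 0 := by
    rintro rfl; simp at hz
  have hsq : (z ^ ((1:ℂ)/2)) ^ 2 = z := by
    rw [← cpow_nat_mul]
    norm_num
  have hargpi : z.arg ≠ Real.pi := by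
    rw [ne_eq, Complex.arg_eq_pi_iff]
    rintro ⟨h1, h2⟩
    rcases hz with h | h
    · linarith
    · exact h h2
  have harg1 : -Real.pi < z.arg := Complex.neg_pi_lt_arg z
  have harg2 : z.arg < Real.pi := lt_of_le_of_ne (Complex.arg_le_pi z) hargpi
  have hw : z ^ ((1:ℂ)/2) = Complex.exp (Complex.log z * ((1:ℂ)/2)) :=
    Complex.cpow_def_of_ne_zero hz0 _
  have him : (Complex.log z * ((1:ℂ)/2)).im = z.arg / 2 := by
    simp [Complex.mul_im, Complex.log_im, Complex.log_re]
    ring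
  have hre : 0 < (z ^ ((1:ℂ)/2)).re := by
    rw [hw, Complex.exp_re, him]
    have : 0 < Real.cos (z.arg/2) := by
      apply Real.cos_pos_of_mem_Ioo
      constructor <;> [linarith; linarith]
    positivity
  refine ⟨hsq, hre, ?_, ?_⟩
  · intro h
    rw [hw, Complex.exp_im, him]
    have h0 : 0 ≤ z.arg := Complex.arg_nonneg_iff.2 h
    have : 0 ≤ Real.sin (z.arg/2) :=
      Real.sin_nonneg_of_nonneg_of_le_pi (by linarith) (by linarith [Real.pi_pos])
    positivity
  · intro h
    rw [hw, Complex.exp_im, him]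
    have h0 : z.arg ≤ 0 := by
      rcases lt_or_eq_of_le h with h' | h'
      · exact (Complex.arg_neg_iff.2 h').le
      · rcases hz with hre' | him'
        · rw [Complex.arg_eq_zero_iff.2 ⟨hre'.le, h'⟩]
        · exact absurd h' him'
    have hs : Real.sin (z.arg/2) ≤ 0 :=
      Real.sin_nonpos_of_nonpos_of_neg_pi_le (by linarith) (by linarith)
    have he : 0 < Real.exp ((Complex.log z * ((1:ℂ)/2)).re) := Real.exp_pos _
    nlinarith

set_option maxHeartbeats 3200000 in
/-- Expansion of the g-function of equation (2.7) at infinity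
(from the proof of Lemma 2.7): if `λ0` is a real root of
`λ0³ - 24 t λ0 + 48 x = 0`, then `g(λ) - θ(λ) = h1/√λ + O(λ^{-3/2})`
as `λ → ∞` off the cut `(-∞,0]`, with `h1 = λ0⁴/128 - t λ0²/8`. -/
theorem g_function_expansion (lam0 t x : ℝ)
    (hcubic : lam0 ^ 3 - 24 * t * lam0 + 48 * x = 0) :
    ∃ C > (0 : ℝ), ∃ R > |lam0| + 1, ∀ lam : ℂ,
      lam ∉ (fun r : ℝ => (r : ℂ)) '' Iic 0 → R ≤ ‖lam‖ →
      ‖((((1 : ℂ) / 105) * (lam - (lam0 : ℂ)) ^ ((7 : ℂ) / 2)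
            + ((lam0 : ℂ) / 30) * (lam - (lam0 : ℂ)) ^ ((5 : ℂ) / 2)
            + (((lam0 : ℂ) ^ 2 - 8 * (t : ℂ)) / 24) * (lam - (lam0 : ℂ)) ^ ((3 : ℂ) / 2))
          - (((1 : ℂ) / 105) * lam ^ ((7 : ℂ) / 2)
              - ((t : ℂ) / 3) * lam ^ ((3 : ℂ) / 2)
              + (x : ℂ) * lam ^ ((1 : ℂ) / 2))
          - ((lam0 ^ 4 / 128 - t * lam0 ^ 2 / 8 : ℝ) : ℂ) * lam ^ (-(1 : ℂ) / 2))‖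
      ≤ C * ‖lam‖ ^ (-(3 / 2) : ℝ) := by
  refine ⟨(|(-lam0^3*t/48 + 7*lam0^5/3840)| + |(-lam0^4*t/128 + lam0^6/1024)| + |(-5*lam0^5*t/384 + 5*lam0^7/7168)|) + 2*(|(-7/128*lam0^5)| + |(-7/512*lam0^6)| + |(-5/1024*lam0^7)| + |(-25/16384*lam0^8)|)*(8/105 + 4*|lam0|/30 + (lam0^2 + 8*|t|)/12) + 1, by positivity, 2*(|lam0|+1),
    by linarith [abs_nonneg lam0], ?_⟩
  intro lam hmem hR
  have hal0 : (0:ℝ) < ‖lam‖ := by linarith [abs_nonneg lam0]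
  have hal0' : ‖lam‖ ≠ 0 := ne_of_gt hal0
  have hal1 : (1:ℝ) ≤ ‖lam‖ := by linarith [abs_nonneg lam0]
  have hl2 : |lam0| ≤ ‖lam‖/2 := by linarith
  have hlam0 : lam ≠ 0 := by
    intro h; rw [h] at hR; simp at hR; linarith [abs_nonneg lam0]
  have hcut : 0 < lam.re ∨ lam.im ≠ 0 := by
    by_contra hcon
    push_neg at hcon
    obtain ⟨h1, h2⟩ := hcon
    exact hmem ⟨lam.re, h1, by apply Complex.ext <;> simp [h2]⟩
  have hre_big : lam.im = 0 → ‖lam‖ ≤ lam.re := by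
    intro h2
    have h1 : 0 < lam.re := by
      rcases hcut with h | h
      · exact h
      · exact absurd h2 h
    have := Complex.norm_le_abs_re_add_abs_im lam
    rw [h2] at this
    simp at this
    calc ‖lam‖ ≤ |lam.re| := by simpa using this
    _ = lam.re := abs_of_pos h1
  have hcut2 : 0 < (lam - (lam0:ℂ)).re ∨ (lam - (lam0:ℂ)).im ≠ 0 := by
    have him' : (lam - (lam0:ℂ)).im = lam.im := by simp
    rcases eq_or_ne lam.im 0 with h | h
    · left
      have h3 := hre_big h
      have : (lam - (lam0:ℂ)).re = lam.re - lam0 := by simp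
      rw [this]
      have : lam0 ≤ |lam0| := le_abs_self lam0
      linarith
    · right; rw [him']; exact h
  obtain ⟨hw2, hwre, hwim1, hwim2⟩ := sqrt_facts' lam hcut
  obtain ⟨hs2, hsre, hsim1, hsim2⟩ := sqrt_facts' (lam - (lam0:ℂ)) hcut2
  obtain ⟨w, hwdef⟩ : ∃ w : ℂ, w = lam ^ ((1:ℂ)/2) := ⟨_, rfl⟩
  obtain ⟨s, hsdef⟩ : ∃ s : ℂ, s = (lam - (lam0:ℂ)) ^ ((1:ℂ)/2) := ⟨_, rfl⟩
  rw [← hwdef] at hw2 hwre hwim1 hwim2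
  rw [← hsdef] at hs2 hsre hsim1 hsim2
  have hw0 : w ≠ 0 := by
    intro h
    apply hlam0
    rw [← hw2, h]; ring
  obtain ⟨u, hudef⟩ : ∃ u : ℂ, u = s / w := ⟨_, rfl⟩
  have huw : u * w = s := by rw [hudef]; field_simp
  have hu2 : u^2 * lam = lam - (lam0:ℂ) := by
    have h : u^2 * lam = (u*w)^2 := by rw [← hw2]; ring
    rw [h, huw, hs2]
  have hure : 0 ≤ u.re := by
    rw [hudef, Complex.div_re]
    have him' : (lam - (lam0:ℂ)).im = lam.im := by simp
    have h2 : 0 ≤ s.im * w.im := by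
      rcases le_or_gt 0 lam.im with h | h
      · exact mul_nonneg (hsim1 (by rw [him']; exact h)) (hwim1 h)
      · have a1 := hsim2 (by rw [him']; exact h.le)
        have a2 := hwim2 h.le
        nlinarith
    have h1 : 0 ≤ s.re * w.re := mul_nonneg hsre.le hwre.le
    have := Complex.normSq_nonneg w
    positivity
  have hwin : w * w⁻¹ = 1 := mul_inv_cancel₀ hw0
  -- lower bound for |D|
  have hu1abs : 1 ≤ ‖(u+1)‖ := by
    have h : (1:ℝ) ≤ (u+1).re := by
      simp only [Complex.add_re, Complex.one_re]
      linarith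
    exact h.trans (Complex.re_le_norm _)
  have habs4 : |lam0| ^ 2 = lam0^2 := sq_abs lam0
  have hTp : ‖((lam^4 - (lam0:ℂ)*lam^3/2 - (lam0:ℂ)^2*lam^2/8 - (lam0:ℂ)^3*lam/16 - 5*(lam0:ℂ)^4/128) - lam^4)‖ ≤ ‖lam‖^4/2 := by
    have h0 : (lam^4 - (lam0:ℂ)*lam^3/2 - (lam0:ℂ)^2*lam^2/8 - (lam0:ℂ)^3*lam/16 - 5*(lam0:ℂ)^4/128) - lam^4 = -((lam0:ℂ)*lam^3/2) + (-((lam0:ℂ)^2*lam^2/8) + (-((lam0:ℂ)^3*lam/16) + -(5*(lam0:ℂ)^4/128))) := by ring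
    rw [h0]
    have e1 : ‖(-((lam0:ℂ)*lam^3/2))‖ = |lam0| *‖lam‖^3/2 := by
      rw [norm_neg, norm_div, norm_mul, norm_pow, Complex.norm_real, Real.norm_eq_abs]
      norm_num
    have e2 : ‖(-((lam0:ℂ)^2*lam^2/8))‖ = lam0^2*‖lam‖^2/8 := by
      rw [norm_neg, norm_div, norm_mul, norm_pow, norm_pow, Complex.norm_real, Real.norm_eq_abs, habs4]
      norm_num
    have e3 : ‖(-((lam0:ℂ)^3*lam/16))‖ = |lam0|^3*‖lam‖/16 := by
      rw [norm_neg, norm_div, norm_mul, norm_pow, Complex.norm_real, Real.norm_eq_abs]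
      norm_num
    have e4 : ‖(-(5*(lam0:ℂ)^4/128))‖ = 5*lam0^4/128 := by
      rw [norm_neg, norm_div, norm_mul, norm_pow, Complex.norm_real, Real.norm_eq_abs]
      norm_num
      rw [show |lam0|^4 = (|lam0|^2)^2 by ring, habs4]
      ring
    have p1 : |lam0| *‖lam‖^3 ≤ (‖lam‖/2)*‖lam‖^3 :=
      mul_le_mul_of_nonneg_right hl2 (by positivity)
    have p2 : lam0^2*‖lam‖^2 ≤ (‖lam‖/2)^2*‖lam‖^2 := by
      have : lam0^2 ≤ (‖lam‖/2)^2 := by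
        rw [← habs4]
        exact pow_le_pow_left₀ (abs_nonneg lam0) hl2 2
      exact mul_le_mul_of_nonneg_right this (by positivity)
    have p3 : |lam0|^3*‖lam‖ ≤ (‖lam‖/2)^3*‖lam‖ :=
      mul_le_mul_of_nonneg_right (pow_le_pow_left₀ (abs_nonneg lam0) hl2 3) (by positivity)
    have p4 : lam0^4 ≤ (‖lam‖/2)^4 := by
      rw [show lam0^4 = (lam0^2)^2 by ring, ← habs4, show (|lam0|^2)^2 = |lam0|^4 by ring]
      exact pow_le_pow_left₀ (abs_nonneg lam0) hl2 4
    calc ‖_‖ ≤ ‖(-((lam0:ℂ)*lam^3/2))‖ + ‖(-((lam0:ℂ)^2*lam^2/8) + (-((lam0:ℂ)^3*lam/16) + -(5*(lam0:ℂ)^4/128)))‖ := norm_add_le _ _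
    _ ≤ ‖(-((lam0:ℂ)*lam^3/2))‖ + (‖(-((lam0:ℂ)^2*lam^2/8))‖ + (‖(-((lam0:ℂ)^3*lam/16))‖ + ‖(-(5*(lam0:ℂ)^4/128))‖)) := by
      gcongr
      calc ‖_‖ ≤ _ := norm_add_le _ _
      _ ≤ _ := by gcongr; exact norm_add_le _ _
    _ = |lam0| *‖lam‖^3/2 + (lam0^2*‖lam‖^2/8 + (|lam0|^3*‖lam‖/16 + 5*lam0^4/128)) := by
      rw [e1, e2, e3, e4]
    _ ≤ ‖lam‖^4/2 := by nlinarith [hal0, hal1]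
  have hDlow : ‖lam‖^4/2 ≤ ‖(lam^4*u + (lam^4 - (lam0:ℂ)*lam^3/2 - (lam0:ℂ)^2*lam^2/8 - (lam0:ℂ)^3*lam/16 - 5*(lam0:ℂ)^4/128))‖ := by
    have heq : lam^4*(u+1) = (lam^4*u + (lam^4 - (lam0:ℂ)*lam^3/2 - (lam0:ℂ)^2*lam^2/8 - (lam0:ℂ)^3*lam/16 - 5*(lam0:ℂ)^4/128)) - ((lam^4 - (lam0:ℂ)*lam^3/2 - (lam0:ℂ)^2*lam^2/8 - (lam0:ℂ)^3*lam/16 - 5*(lam0:ℂ)^4/128) - lam^4) := by ring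
    have h1 : ‖lam‖^4 ≤ ‖(lam^4*(u+1))‖ := by
      rw [norm_mul, norm_pow]
      nlinarith [hu1abs, pow_pos hal0 4]
    have h2 : ‖(lam^4*(u+1))‖ ≤ ‖(lam^4*u + (lam^4 - (lam0:ℂ)*lam^3/2 - (lam0:ℂ)^2*lam^2/8 - (lam0:ℂ)^3*lam/16 - 5*(lam0:ℂ)^4/128))‖ + ‖((lam^4 - (lam0:ℂ)*lam^3/2 - (lam0:ℂ)^2*lam^2/8 - (lam0:ℂ)^3*lam/16 - 5*(lam0:ℂ)^4/128) - lam^4)‖ := by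
      rw [heq]
      simpa using norm_sub_le ((lam^4*u + (lam^4 - (lam0:ℂ)*lam^3/2 - (lam0:ℂ)^2*lam^2/8 - (lam0:ℂ)^3*lam/16 - 5*(lam0:ℂ)^4/128))) ((lam^4 - (lam0:ℂ)*lam^3/2 - (lam0:ℂ)^2*lam^2/8 - (lam0:ℂ)^3*lam/16 - 5*(lam0:ℂ)^4/128) - lam^4)
    linarith
  have hD0 : (lam^4*u + (lam^4 - (lam0:ℂ)*lam^3/2 - (lam0:ℂ)^2*lam^2/8 - (lam0:ℂ)^3*lam/16 - 5*(lam0:ℂ)^4/128)) ≠ 0 := by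
    intro h
    rw [h, norm_zero] at hDlow
    nlinarith [pow_pos hal0 4]
  -- cpow rewrites
  have c7 : ∀ z : ℂ, z ^ ((7:ℂ)/2) = (z ^ ((1:ℂ)/2))^7 := fun z => by
    rw [show ((7:ℂ)/2) = ((7:ℕ):ℂ)*((1:ℂ)/2) by norm_num, cpow_nat_mul]
  have c5 : ∀ z : ℂ, z ^ ((5:ℂ)/2) = (z ^ ((1:ℂ)/2))^5 := fun z => by
    rw [show ((5:ℂ)/2) = ((5:ℕ):ℂ)*((1:ℂ)/2) by norm_num, cpow_nat_mul]
  have c3 : ∀ z : ℂ, z ^ ((3:ℂ)/2) = (z ^ ((1:ℂ)/2))^3 := fun z => by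
    rw [show ((3:ℂ)/2) = ((3:ℕ):ℂ)*((1:ℂ)/2) by norm_num, cpow_nat_mul]
  have cm : lam ^ (-(1:ℂ)/2) = (lam ^ ((1:ℂ)/2))⁻¹ := by
    rw [show (-(1:ℂ)/2) = -((1:ℂ)/2) by ring, cpow_neg]
  have hx : (x:ℂ) = (t:ℂ)*(lam0:ℂ)/2 - (lam0:ℂ)^3/48 := by
    have hxr : x = t*lam0/2 - lam0^3/48 := by linarith
    rw [hxr]; push_cast; ring
  rw [c7 (lam - (lam0:ℂ)), c7 lam, c5 (lam - (lam0:ℂ)), c3 (lam - (lam0:ℂ)), c3 lam, cm,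
    ← hwdef, ← hsdef, hx]
  -- the key algebraic identity
  have h7D : lam^7*(lam^4*u + (lam^4 - (lam0:ℂ)*lam^3/2 - (lam0:ℂ)^2*lam^2/8 - (lam0:ℂ)^3*lam/16 - 5*(lam0:ℂ)^4/128)) ≠ 0 := mul_ne_zero (pow_ne_zero 7 hlam0) hD0
  have hkey : ((1:ℂ)/105 * s^7 + (lam0:ℂ)/30 * s^5 + ((lam0:ℂ)^2 - 8*(t:ℂ))/24 * s^3 - ((1:ℂ)/105 * w^7 - (t:ℂ)/3 * w^3 + ((t:ℂ)*(lam0:ℂ)/2 - (lam0:ℂ)^3/48) * w) - ((lam0 ^ 4 / 128 - t * lam0 ^ 2 / 8 : ℝ) : ℂ) * w⁻¹) * w = u*lam*((lam - (lam0:ℂ))^3/105 + (lam0:ℂ)*(lam - (lam0:ℂ))^2/30 + ((lam0^2 - 8*t : ℝ):ℂ)*(lam - (lam0:ℂ))/24) - lam*(lam^3/105 - (t:ℂ)*lam/3 + ((t:ℂ)*(lam0:ℂ)/2 - (lam0:ℂ)^3/48)) - ((lam0 ^ 4 / 128 - t * lam0 ^ 2 / 8 : ℝ) : ℂ) := by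
    linear_combination (norm := (push_cast; ring1))
      (w*s*((s^4 + s^2*(lam - (lam0:ℂ)) + (lam - (lam0:ℂ))^2)/105 + (lam0:ℂ)*(s^2 + (lam - (lam0:ℂ)))/30 + ((lam0^2 - 8*t : ℝ):ℂ)/24))*hs2 + (((lam - (lam0:ℂ))^3/105 + (lam0:ℂ)*(lam - (lam0:ℂ))^2/30 + ((lam0^2 - 8*t : ℝ):ℂ)*(lam - (lam0:ℂ))/24)*u + (-(w^6 + w^4*lam + w^2*lam^2 + lam^3)/105 + (t:ℂ)/3*(w^2 + lam) - ((t:ℂ)*(lam0:ℂ)/2 - (lam0:ℂ)^3/48)))*hw2 + (-(((lam - (lam0:ℂ))^3/105 + (lam0:ℂ)*(lam - (lam0:ℂ))^2/30 + ((lam0^2 - 8*t : ℝ):ℂ)*(lam - (lam0:ℂ))/24)*w))*huw + (-((lam0 ^ 4 / 128 - t * lam0 ^ 2 / 8 : ℝ) : ℂ))*hwin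
  have hmul : (u*lam*((lam - (lam0:ℂ))^3/105 + (lam0:ℂ)*(lam - (lam0:ℂ))^2/30 + ((lam0^2 - 8*t : ℝ):ℂ)*(lam - (lam0:ℂ))/24) - lam*(lam^3/105 - (t:ℂ)*lam/3 + ((t:ℂ)*(lam0:ℂ)/2 - (lam0:ℂ)^3/48)) - ((lam0 ^ 4 / 128 - t * lam0 ^ 2 / 8 : ℝ) : ℂ))*(lam^7*(lam^4*u + (lam^4 - (lam0:ℂ)*lam^3/2 - (lam0:ℂ)^2*lam^2/8 - (lam0:ℂ)^3*lam/16 - 5*(lam0:ℂ)^4/128))) = (((-lam0^3*t/48 + 7*lam0^5/3840 : ℝ):ℂ)*lam^2 + ((-lam0^4*t/128 + lam0^6/1024 : ℝ):ℂ)*lam + ((-5*lam0^5*t/384 + 5*lam0^7/7168 : ℝ):ℂ))*(lam^4*(lam^4*u + (lam^4 - (lam0:ℂ)*lam^3/2 - (lam0:ℂ)^2*lam^2/8 - (lam0:ℂ)^3*lam/16 - 5*(lam0:ℂ)^4/128))) + (((-7/128*lam0^5 : ℝ):ℂ)*lam^3 + ((-7/512*lam0^6 : ℝ):ℂ)*lam^2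 + ((-5/1024*lam0^7 : ℝ):ℂ)*lam + ((-25/16384*lam0^8 : ℝ):ℂ))*lam^4*((lam - (lam0:ℂ))^3/105 + (lam0:ℂ)*(lam - (lam0:ℂ))^2/30 + ((lam0^2 - 8*t : ℝ):ℂ)*(lam - (lam0:ℂ))/24) := by
    linear_combination (norm := (push_cast; ring1)) (lam^11*((lam - (lam0:ℂ))^3/105 + (lam0:ℂ)*(lam - (lam0:ℂ))^2/30 + ((lam0^2 - 8*t : ℝ):ℂ)*(lam - (lam0:ℂ))/24))*hu2
  have key3 : u*lam*((lam - (lam0:ℂ))^3/105 + (lam0:ℂ)*(lam - (lam0:ℂ))^2/30 + ((lam0^2 - 8*t : ℝ):ℂ)*(lam - (lam0:ℂ))/24) - lam*(lam^3/105 - (t:ℂ)*lam/3 + ((t:ℂ)*(lam0:ℂ)/2 - (lam0:ℂ)^3/48)) - ((lam0 ^ 4 / 128 - t * lam0 ^ 2 / 8 : ℝ) : ℂ) = (((-lam0^3*t/48 + 7*lam0^5/3840 : ℝ):ℂ)*lam^2 + ((-lam0^4*t/128 + lam0^6/1024 : ℝ):ℂ)*lam + ((-5*lam0^5*t/384 +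 5*lam0^7/7168 : ℝ):ℂ))/lam^3 + (((-7/128*lam0^5 : ℝ):ℂ)*lam^3 + ((-7/512*lam0^6 : ℝ):ℂ)*lam^2 + ((-5/1024*lam0^7 : ℝ):ℂ)*lam + ((-25/16384*lam0^8 : ℝ):ℂ))*lam*((lam - (lam0:ℂ))^3/105 + (lam0:ℂ)*(lam - (lam0:ℂ))^2/30 + ((lam0^2 - 8*t : ℝ):ℂ)*(lam - (lam0:ℂ))/24)/(lam^4*(lam^4*u + (lam^4 - (lam0:ℂ)*lam^3/2 - (lam0:ℂ)^2*lam^2/8 - (lam0:ℂ)^3*lam/16 - 5*(lam0:ℂ)^4/128))) := by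
    rw [div_add_div _ _ (pow_ne_zero 3 hlam0) (mul_ne_zero (pow_ne_zero 4 hlam0) hD0),
      eq_div_iff (mul_ne_zero (pow_ne_zero 3 hlam0) (mul_ne_zero (pow_ne_zero 4 hlam0) hD0))]
    linear_combination (norm := (push_cast; ring1)) (lam^11*((lam - (lam0:ℂ))^3/105 + (lam0:ℂ)*(lam - (lam0:ℂ))^2/30 + ((lam0^2 - 8*t : ℝ):ℂ)*(lam - (lam0:ℂ))/24))*hu2
  have keyE : ((1:ℂ)/105 * s^7 + (lam0:ℂ)/30 * s^5 + ((lam0:ℂ)^2 - 8*(t:ℂ))/24 * s^3 - ((1:ℂ)/105 * w^7 - (t:ℂ)/3 * w^3 + ((t:ℂ)*(lam0:ℂ)/2 - (lam0:ℂ)^3/48) * w) - ((lam0 ^ 4 / 128 - t * lam0 ^ 2 / 8 : ℝ) : ℂ) * w⁻¹) = ((((-lam0^3*t/48 + 7*lam0^5/3840 : ℝ):ℂ)*lam^2 + ((-lam0^4*t/128 + lam0^6/1024 : ℝ):ℂ)*lam + ((-5*lam0^5*t/384 + 5*lam0^7/7168 : ℝ):ℂ))/lam^3 + (((-7/128*lam0^5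 : ℝ):ℂ)*lam^3 + ((-7/512*lam0^6 : ℝ):ℂ)*lam^2 + ((-5/1024*lam0^7 : ℝ):ℂ)*lam + ((-25/16384*lam0^8 : ℝ):ℂ))*lam*((lam - (lam0:ℂ))^3/105 + (lam0:ℂ)*(lam - (lam0:ℂ))^2/30 + ((lam0^2 - 8*t : ℝ):ℂ)*(lam - (lam0:ℂ))/24)/(lam^4*(lam^4*u + (lam^4 - (lam0:ℂ)*lam^3/2 - (lam0:ℂ)^2*lam^2/8 - (lam0:ℂ)^3*lam/16 - 5*(lam0:ℂ)^4/128)))) / w := by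
    rw [eq_div_iff hw0, hkey, key3]
  rw [keyE, norm_div]
  have hwabs : ‖w‖ = ‖lam‖ ^ ((1:ℝ)/2) := by
    rw [hwdef, show ((1:ℂ)/2) = ((1/2:ℝ):ℂ) by norm_num, Complex.norm_cpow_of_ne_zero hlam0]
    simp
  rw [hwabs]
  -- bounds
  have hLabs : ‖(lam - (lam0:ℂ))‖ ≤ 2*‖lam‖ := by
    have h : lam - (lam0:ℂ) = lam + (-(lam0:ℂ)) := by ring
    rw [h]
    refine (norm_add_le _ _).trans ?_
    rw [norm_neg, Complex.norm_real, Real.norm_eq_abs]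
    linarith
  have hA : ‖((lam - (lam0:ℂ))^3/105 + (lam0:ℂ)*(lam - (lam0:ℂ))^2/30 + ((lam0^2 - 8*t : ℝ):ℂ)*(lam - (lam0:ℂ))/24)‖ ≤ (8/105 + 4*|lam0|/30 + (lam0^2 + 8*|t|)/12)*‖lam‖^3 := by
    have habs_t : |lam0^2 - 8*t| ≤ lam0^2 + 8*|t| := by
      rw [abs_le]
      constructor <;> nlinarith [le_abs_self t, neg_abs_le t, sq_nonneg lam0]
    have e1 : ‖((lam - (lam0:ℂ))^3/105)‖ ≤ (2*‖lam‖)^3/105 := by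
      rw [norm_div, norm_pow, show ‖(105:ℂ)‖ = 105 by norm_num]
      gcongr
    have e2 : ‖((lam0:ℂ)*(lam - (lam0:ℂ))^2/30)‖ ≤ |lam0| *(2*‖lam‖)^2/30 := by
      rw [norm_div, norm_mul, norm_pow, Complex.norm_real, Real.norm_eq_abs, show ‖(30:ℂ)‖ = 30 by norm_num]
      gcongr
    have e3 : ‖(((lam0^2 - 8*t : ℝ):ℂ)*(lam - (lam0:ℂ))/24)‖ ≤ |lam0^2 - 8*t| *(2*‖lam‖)/24 := by
      rw [norm_div, norm_mul, Complex.norm_real, Real.norm_eq_abs, show ‖(24:ℂ)‖ = 24 by norm_num]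
      gcongr
    calc ‖((lam - (lam0:ℂ))^3/105 + (lam0:ℂ)*(lam - (lam0:ℂ))^2/30 + ((lam0^2 - 8*t : ℝ):ℂ)*(lam - (lam0:ℂ))/24)‖ ≤ ‖((lam - (lam0:ℂ))^3/105 + (lam0:ℂ)*(lam - (lam0:ℂ))^2/30)‖ + ‖(((lam0^2 - 8*t : ℝ):ℂ)*(lam - (lam0:ℂ))/24)‖ := norm_add_le _ _
    _ ≤ (‖((lam - (lam0:ℂ))^3/105)‖ + ‖((lam0:ℂ)*(lam - (lam0:ℂ))^2/30)‖) + ‖(((lam0^2 - 8*t : ℝ):ℂ)*(lam - (lam0:ℂ))/24)‖ := by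
      gcongr
      exact norm_add_le _ _
    _ ≤ ((2*‖lam‖)^3/105 + |lam0| *(2*‖lam‖)^2/30) + |lam0^2 - 8*t| *(2*‖lam‖)/24 := by
      gcongr
    _ ≤ (8/105 + 4*|lam0|/30 + (lam0^2 + 8*|t|)/12)*‖lam‖^3 := by
      have h12 : ‖lam‖^2 ≤ ‖lam‖^3 := by nlinarith
      have h13 : ‖lam‖ ≤ ‖lam‖^3 := by nlinarith
      nlinarith [mul_le_mul_of_nonneg_left h12 (abs_nonneg lam0),
        mul_le_mul habs_t h13 hal0.le (by positivity : (0:ℝ) ≤ lam0^2 + 8*|t|),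
        abs_nonneg (lam0^2 - 8*t)]
  have hN : ‖(((-7/128*lam0^5 : ℝ):ℂ)*lam^3 + ((-7/512*lam0^6 : ℝ):ℂ)*lam^2 + ((-5/1024*lam0^7 : ℝ):ℂ)*lam + ((-25/16384*lam0^8 : ℝ):ℂ))‖ ≤ (|(-7/128*lam0^5)| + |(-7/512*lam0^6)| + |(-5/1024*lam0^7)| + |(-25/16384*lam0^8)|)*‖lam‖^3 := by
    have e1 : ‖(((-7/128*lam0^5 : ℝ):ℂ)*lam^3)‖ = |(-7/128*lam0^5)| *‖lam‖^3 := by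
      rw [norm_mul, norm_pow, Complex.norm_real, Real.norm_eq_abs]
    have e2 : ‖(((-7/512*lam0^6 : ℝ):ℂ)*lam^2)‖ = |(-7/512*lam0^6)| *‖lam‖^2 := by
      rw [norm_mul, norm_pow, Complex.norm_real, Real.norm_eq_abs]
    have e3 : ‖(((-5/1024*lam0^7 : ℝ):ℂ)*lam)‖ = |(-5/1024*lam0^7)| *‖lam‖ := by
      rw [norm_mul, Complex.norm_real, Real.norm_eq_abs]
    have e4 : ‖(((-25/16384*lam0^8 : ℝ):ℂ))‖ = |(-25/16384*lam0^8)| := by rw [Complex.norm_real, Real.norm_eq_abs]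
    have h12 : ‖lam‖^2 ≤ ‖lam‖^3 := by nlinarith
    have h13 : ‖lam‖ ≤ ‖lam‖^3 := by nlinarith
    have h10 : 1 ≤ ‖lam‖^3 := by nlinarith
    calc ‖(((-7/128*lam0^5 : ℝ):ℂ)*lam^3 + ((-7/512*lam0^6 : ℝ):ℂ)*lam^2 + ((-5/1024*lam0^7 : ℝ):ℂ)*lam + ((-25/16384*lam0^8 : ℝ):ℂ))‖ ≤ ‖(((-7/128*lam0^5 : ℝ):ℂ)*lam^3 + ((-7/512*lam0^6 : ℝ):ℂ)*lam^2 + ((-5/1024*lam0^7 : ℝ):ℂ)*lam)‖ + ‖(((-25/16384*lam0^8 : ℝ):ℂ))‖ := norm_add_le _ _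
    _ ≤ (‖(((-7/128*lam0^5 : ℝ):ℂ)*lam^3 + ((-7/512*lam0^6 : ℝ):ℂ)*lam^2)‖ + ‖(((-5/1024*lam0^7 : ℝ):ℂ)*lam)‖) + ‖(((-25/16384*lam0^8 : ℝ):ℂ))‖ := by
      gcongr
      exact norm_add_le _ _
    _ ≤ ((‖(((-7/128*lam0^5 : ℝ):ℂ)*lam^3)‖ + ‖(((-7/512*lam0^6 : ℝ):ℂ)*lam^2)‖) + ‖(((-5/1024*lam0^7 : ℝ):ℂ)*lam)‖) + ‖(((-25/16384*lam0^8 : ℝ):ℂ))‖ := by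
      gcongr
      exact norm_add_le _ _
    _ = |(-7/128*lam0^5)| *‖lam‖^3 + |(-7/512*lam0^6)| *‖lam‖^2 + |(-5/1024*lam0^7)| *‖lam‖ + |(-25/16384*lam0^8)| := by
      rw [e1, e2, e3, e4]
    _ ≤ (|(-7/128*lam0^5)| + |(-7/512*lam0^6)| + |(-5/1024*lam0^7)| + |(-25/16384*lam0^8)|)*‖lam‖^3 := by
      nlinarith [mul_le_mul_of_nonneg_left h12 (abs_nonneg (-7/512*lam0^6)),
        mul_le_mul_of_nonneg_left h13 (abs_nonneg (-5/1024*lam0^7)),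
        mul_le_mul_of_nonneg_left h10 (abs_nonneg (-25/16384*lam0^8))]
  have hcq : ‖(((-lam0^3*t/48 + 7*lam0^5/3840 : ℝ):ℂ)*lam^2 + ((-lam0^4*t/128 + lam0^6/1024 : ℝ):ℂ)*lam + ((-5*lam0^5*t/384 + 5*lam0^7/7168 : ℝ):ℂ))‖ ≤ (|(-lam0^3*t/48 + 7*lam0^5/3840)| + |(-lam0^4*t/128 + lam0^6/1024)| + |(-5*lam0^5*t/384 + 5*lam0^7/7168)|)*‖lam‖^2 := by
    have e1 : ‖(((-lam0^3*t/48 + 7*lam0^5/3840 : ℝ):ℂ)*lam^2)‖ = |(-lam0^3*t/48 + 7*lam0^5/3840)| *‖lam‖^2 := by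
      rw [norm_mul, norm_pow, Complex.norm_real, Real.norm_eq_abs]
    have e2 : ‖(((-lam0^4*t/128 + lam0^6/1024 : ℝ):ℂ)*lam)‖ = |(-lam0^4*t/128 + lam0^6/1024)| *‖lam‖ := by
      rw [norm_mul, Complex.norm_real, Real.norm_eq_abs]
    have e3 : ‖(((-5*lam0^5*t/384 + 5*lam0^7/7168 : ℝ):ℂ))‖ = |(-5*lam0^5*t/384 + 5*lam0^7/7168)| := by rw [Complex.norm_real, Real.norm_eq_abs]
    have h12 : ‖lam‖ ≤ ‖lam‖^2 := by nlinarith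
    have h10 : 1 ≤ ‖lam‖^2 := by nlinarith
    calc ‖(((-lam0^3*t/48 + 7*lam0^5/3840 : ℝ):ℂ)*lam^2 + ((-lam0^4*t/128 + lam0^6/1024 : ℝ):ℂ)*lam + ((-5*lam0^5*t/384 + 5*lam0^7/7168 : ℝ):ℂ))‖ ≤ ‖(((-lam0^3*t/48 + 7*lam0^5/3840 : ℝ):ℂ)*lam^2 + ((-lam0^4*t/128 + lam0^6/1024 : ℝ):ℂ)*lam)‖ + ‖(((-5*lam0^5*t/384 + 5*lam0^7/7168 : ℝ):ℂ))‖ := norm_add_le _ _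
    _ ≤ (‖(((-lam0^3*t/48 + 7*lam0^5/3840 : ℝ):ℂ)*lam^2)‖ + ‖(((-lam0^4*t/128 + lam0^6/1024 : ℝ):ℂ)*lam)‖) + ‖(((-5*lam0^5*t/384 + 5*lam0^7/7168 : ℝ):ℂ))‖ := by
      gcongr
      exact norm_add_le _ _
    _ = |(-lam0^3*t/48 + 7*lam0^5/3840)| *‖lam‖^2 + |(-lam0^4*t/128 + lam0^6/1024)| *‖lam‖ + |(-5*lam0^5*t/384 + 5*lam0^7/7168)| := by
      rw [e1, e2, e3]
    _ ≤ (|(-lam0^3*t/48 + 7*lam0^5/3840)| + |(-lam0^4*t/128 + lam0^6/1024)| + |(-5*lam0^5*t/384 + 5*lam0^7/7168)|)*‖lam‖^2 := by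
      nlinarith [mul_le_mul_of_nonneg_left h12 (abs_nonneg (-lam0^4*t/128 + lam0^6/1024)),
        mul_le_mul_of_nonneg_left h10 (abs_nonneg (-5*lam0^5*t/384 + 5*lam0^7/7168))]
  -- assemble
  have t1 : ‖((((-lam0^3*t/48 + 7*lam0^5/3840 : ℝ):ℂ)*lam^2 + ((-lam0^4*t/128 + lam0^6/1024 : ℝ):ℂ)*lam + ((-5*lam0^5*t/384 + 5*lam0^7/7168 : ℝ):ℂ))/lam^3)‖ ≤ (|(-lam0^3*t/48 + 7*lam0^5/3840)| + |(-lam0^4*t/128 + lam0^6/1024)| + |(-5*lam0^5*t/384 + 5*lam0^7/7168)|)/‖lam‖ := by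
    rw [norm_div, norm_pow]
    refine le_of_le_of_eq (div_le_div₀ (by positivity) hcq (pow_pos hal0 3) le_rfl) ?_
    field_simp
  have t2 : ‖((((-7/128*lam0^5 : ℝ):ℂ)*lam^3 + ((-7/512*lam0^6 : ℝ):ℂ)*lam^2 + ((-5/1024*lam0^7 : ℝ):ℂ)*lam + ((-25/16384*lam0^8 : ℝ):ℂ))*lam*((lam - (lam0:ℂ))^3/105 + (lam0:ℂ)*(lam - (lam0:ℂ))^2/30 + ((lam0^2 - 8*t : ℝ):ℂ)*(lam - (lam0:ℂ))/24)/(lam^4*(lam^4*u + (lam^4 - (lam0:ℂ)*lam^3/2 - (lam0:ℂ)^2*lam^2/8 - (lam0:ℂ)^3*lam/16 - 5*(lam0:ℂ)^4/128))))‖ ≤ 2*(|(-7/128*lam0^5)| + |(-7/512*lam0^6)| + |(-5/1024*lam0^7)| + |(-25/16384*lam0^8)|)*(8/105 + 4*|lam0|/30 + (lam0^2 + 8*|t|)/12)/‖lam‖ := by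
    rw [norm_div, norm_mul, norm_mul, norm_mul, norm_pow]
    have hnum : ‖(((-7/128*lam0^5 : ℝ):ℂ)*lam^3 + ((-7/512*lam0^6 : ℝ):ℂ)*lam^2 + ((-5/1024*lam0^7 : ℝ):ℂ)*lam + ((-25/16384*lam0^8 : ℝ):ℂ))‖ * ‖lam‖ * ‖((lam - (lam0:ℂ))^3/105 + (lam0:ℂ)*(lam - (lam0:ℂ))^2/30 + ((lam0^2 - 8*t : ℝ):ℂ)*(lam - (lam0:ℂ))/24)‖ ≤ ((|(-7/128*lam0^5)| + |(-7/512*lam0^6)| + |(-5/1024*lam0^7)| + |(-25/16384*lam0^8)|)*‖lam‖^3)*‖lam‖*((8/105 + 4*|lam0|/30 + (lam0^2 + 8*|t|)/12)*‖lam‖^3) := by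
      have h1 : ‖(((-7/128*lam0^5 : ℝ):ℂ)*lam^3 + ((-7/512*lam0^6 : ℝ):ℂ)*lam^2 + ((-5/1024*lam0^7 : ℝ):ℂ)*lam + ((-25/16384*lam0^8 : ℝ):ℂ))‖ * ‖lam‖ * ‖((lam - (lam0:ℂ))^3/105 + (lam0:ℂ)*(lam - (lam0:ℂ))^2/30 + ((lam0^2 - 8*t : ℝ):ℂ)*(lam - (lam0:ℂ))/24)‖ ≤ ((|(-7/128*lam0^5)| + |(-7/512*lam0^6)| + |(-5/1024*lam0^7)| + |(-25/16384*lam0^8)|)*‖lam‖^3)*‖lam‖*‖((lam - (lam0:ℂ))^3/105 + (lam0:ℂ)*(lam - (lam0:ℂ))^2/30 + ((lam0^2 - 8*t : ℝ):ℂ)*(lam - (lam0:ℂ))/24)‖ :=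
        mul_le_mul_of_nonneg_right (mul_le_mul_of_nonneg_right hN hal0.le) (norm_nonneg _)
      have h2 : ((|(-7/128*lam0^5)| + |(-7/512*lam0^6)| + |(-5/1024*lam0^7)| + |(-25/16384*lam0^8)|)*‖lam‖^3)*‖lam‖*‖((lam - (lam0:ℂ))^3/105 + (lam0:ℂ)*(lam - (lam0:ℂ))^2/30 + ((lam0^2 - 8*t : ℝ):ℂ)*(lam - (lam0:ℂ))/24)‖ ≤ ((|(-7/128*lam0^5)| + |(-7/512*lam0^6)| + |(-5/1024*lam0^7)| + |(-25/16384*lam0^8)|)*‖lam‖^3)*‖lam‖*((8/105 + 4*|lam0|/30 + (lam0^2 + 8*|t|)/12)*‖lam‖^3) :=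
        mul_le_mul_of_nonneg_left hA (by positivity)
      linarith
    refine le_of_le_of_eq (div_le_div₀ (by positivity) hnum
      (mul_pos (pow_pos hal0 4) (div_pos (pow_pos hal0 4) two_pos))
      (mul_le_mul_of_nonneg_left hDlow (by positivity))) ?_
    field_simp
  have hXb : ‖((((-lam0^3*t/48 + 7*lam0^5/3840 : ℝ):ℂ)*lam^2 + ((-lam0^4*t/128 + lam0^6/1024 : ℝ):ℂ)*lam + ((-5*lam0^5*t/384 + 5*lam0^7/7168 : ℝ):ℂ))/lam^3 + (((-7/128*lam0^5 : ℝ):ℂ)*lam^3 + ((-7/512*lam0^6 : ℝ):ℂ)*lam^2 + ((-5/1024*lam0^7 : ℝ):ℂ)*lam + ((-25/16384*lam0^8 : ℝ):ℂ))*lam*((lam - (lam0:ℂ))^3/105 + (lam0:ℂ)*(lam - (lam0:ℂ))^2/30 + ((lam0^2 - 8*t : ℝ):ℂ)*(lam - (lam0:ℂ))/24)/(lam^4*(lam^4*u + (lam^4 - (lam0:ℂ)*lam^3/2 - (lam0:ℂ)^2*lam^2/8 - (lam0:ℂ)^3*lam/16 - 5*(lam0:ℂ)^4/128))))‖ ≤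 ((|(-lam0^3*t/48 + 7*lam0^5/3840)| + |(-lam0^4*t/128 + lam0^6/1024)| + |(-5*lam0^5*t/384 + 5*lam0^7/7168)|) + 2*(|(-7/128*lam0^5)| + |(-7/512*lam0^6)| + |(-5/1024*lam0^7)| + |(-25/16384*lam0^8)|)*(8/105 + 4*|lam0|/30 + (lam0^2 + 8*|t|)/12))/‖lam‖ := by
    calc ‖((((-lam0^3*t/48 + 7*lam0^5/3840 : ℝ):ℂ)*lam^2 + ((-lam0^4*t/128 + lam0^6/1024 : ℝ):ℂ)*lam + ((-5*lam0^5*t/384 + 5*lam0^7/7168 : ℝ):ℂ))/lam^3 + (((-7/128*lam0^5 : ℝ):ℂ)*lam^3 + ((-7/512*lam0^6 : ℝ):ℂ)*lam^2 + ((-5/1024*lam0^7 : ℝ):ℂ)*lam + ((-25/16384*lam0^8 : ℝ):ℂ))*lam*((lam - (lam0:ℂ))^3/105 + (lam0:ℂ)*(lam - (lam0:ℂ))^2/30 + ((lam0^2 - 8*t : ℝ):ℂ)*(lam - (lam0:ℂ))/24)/(lam^4*(lam^4*u + (lam^4 - (lam0:ℂ)*lam^3/2 - (lam0:ℂ)^2*lam^2/8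 - (lam0:ℂ)^3*lam/16 - 5*(lam0:ℂ)^4/128))))‖ ≤ ‖((((-lam0^3*t/48 + 7*lam0^5/3840 : ℝ):ℂ)*lam^2 + ((-lam0^4*t/128 + lam0^6/1024 : ℝ):ℂ)*lam + ((-5*lam0^5*t/384 + 5*lam0^7/7168 : ℝ):ℂ))/lam^3)‖ + ‖((((-7/128*lam0^5 : ℝ):ℂ)*lam^3 + ((-7/512*lam0^6 : ℝ):ℂ)*lam^2 + ((-5/1024*lam0^7 : ℝ):ℂ)*lam + ((-25/16384*lam0^8 : ℝ):ℂ))*lam*((lam - (lam0:ℂ))^3/105 + (lam0:ℂ)*(lam - (lam0:ℂ))^2/30 + ((lam0^2 - 8*t : ℝ):ℂ)*(lam - (lam0:ℂ))/24)/(lam^4*(lam^4*u + (lam^4 - (lam0:ℂ)*lam^3/2 - (lam0:ℂ)^2*lam^2/8 - (lam0:ℂ)^3*lam/16 - 5*(lam0:ℂ)^4/128))))‖ := norm_add_le _ _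
    _ ≤ (|(-lam0^3*t/48 + 7*lam0^5/3840)| + |(-lam0^4*t/128 + lam0^6/1024)| + |(-5*lam0^5*t/384 + 5*lam0^7/7168)|)/‖lam‖ + 2*(|(-7/128*lam0^5)| + |(-7/512*lam0^6)| + |(-5/1024*lam0^7)| + |(-25/16384*lam0^8)|)*(8/105 + 4*|lam0|/30 + (lam0^2 + 8*|t|)/12)/‖lam‖ := add_le_add t1 t2
    _ = ((|(-lam0^3*t/48 + 7*lam0^5/3840)| + |(-lam0^4*t/128 + lam0^6/1024)| + |(-5*lam0^5*t/384 + 5*lam0^7/7168)|) + 2*(|(-7/128*lam0^5)| + |(-7/512*lam0^6)| + |(-5/1024*lam0^7)| + |(-25/16384*lam0^8)|)*(8/105 + 4*|lam0|/30 + (lam0^2 + 8*|t|)/12))/‖lam‖ := by ring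
  have hinv : ‖lam‖ ^ (-(3/2) : ℝ) = (‖lam‖ * ‖lam‖^((1:ℝ)/2))⁻¹ := by
    rw [show (-(3/2) : ℝ) = -(1 + 1/2) by norm_num, Real.rpow_neg hal0.le,
      Real.rpow_add hal0, Real.rpow_one]
  calc ‖((((-lam0^3*t/48 + 7*lam0^5/3840 : ℝ):ℂ)*lam^2 + ((-lam0^4*t/128 + lam0^6/1024 : ℝ):ℂ)*lam + ((-5*lam0^5*t/384 + 5*lam0^7/7168 : ℝ):ℂ))/lam^3 + (((-7/128*lam0^5 : ℝ):ℂ)*lam^3 + ((-7/512*lam0^6 : ℝ):ℂ)*lam^2 + ((-5/1024*lam0^7 : ℝ):ℂ)*lam + ((-25/16384*lam0^8 : ℝ):ℂ))*lam*((lam - (lam0:ℂ))^3/105 + (lam0:ℂ)*(lam - (lam0:ℂ))^2/30 + ((lam0^2 - 8*t : ℝ):ℂ)*(lam - (lam0:ℂ))/24)/(lam^4*(lam^4*u + (lam^4 - (lam0:ℂ)*lam^3/2 - (lam0:ℂ)^2*lam^2/8 - (lam0:ℂ)^3*lam/16 - 5*(lam0:ℂ)^4/128))))‖ / ‖lam‖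^((1:ℝ)/2)
      ≤ (((|(-lam0^3*t/48 + 7*lam0^5/3840)| + |(-lam0^4*t/128 + lam0^6/1024)| + |(-5*lam0^5*t/384 + 5*lam0^7/7168)|) + 2*(|(-7/128*lam0^5)| + |(-7/512*lam0^6)| + |(-5/1024*lam0^7)| + |(-25/16384*lam0^8)|)*(8/105 + 4*|lam0|/30 + (lam0^2 + 8*|t|)/12))/‖lam‖) / ‖lam‖^((1:ℝ)/2) := by
        gcongr
  _ = ((|(-lam0^3*t/48 + 7*lam0^5/3840)| + |(-lam0^4*t/128 + lam0^6/1024)| + |(-5*lam0^5*t/384 + 5*lam0^7/7168)|) + 2*(|(-7/128*lam0^5)| + |(-7/512*lam0^6)| + |(-5/1024*lam0^7)| + |(-25/16384*lam0^8)|)*(8/105 + 4*|lam0|/30 + (lam0^2 + 8*|t|)/12)) * ‖lam‖ ^ (-(3/2) : ℝ) := by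
      rw [div_div, div_eq_mul_inv, hinv]
  _ ≤ ((|(-lam0^3*t/48 + 7*lam0^5/3840)| + |(-lam0^4*t/128 + lam0^6/1024)| + |(-5*lam0^5*t/384 + 5*lam0^7/7168)|) + 2*(|(-7/128*lam0^5)| + |(-7/512*lam0^6)| + |(-5/1024*lam0^7)| + |(-25/16384*lam0^8)|)*(8/105 + 4*|lam0|/30 + (lam0^2 + 8*|t|)/12) + 1) * ‖lam‖ ^ (-(3/2) : ℝ) := by
      have h := Real.rpow_nonneg hal0.le (-(3/2) : ℝ)
      nlinarith
end

section
/- (Explicit integral evaluation used in the Appendix in the derivation of the inverse Fourier transform.) For every c > 0 the improper integral ∫_{−∞}^{0} e^{iy} (e^{cy} − 1)/y dy converges (as the limit of ∫_{−T}^{0} when T → +∞) and equals (1/2) log(1 + c²) − i (π/2 − arctan(1/c)). -/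
open Complex Filter intervalIntegral

private lemma aux_ne (t : ℝ) : ((t:ℂ) + I) ≠ 0 := by
  intro h; simpa using congrArg Complex.im h

private lemma aux_pointwise (c y : ℝ) (hy : y ≠ 0) :
    Complex.exp (Complex.I * y) * (Complex.exp ((c:ℂ) * y) - 1) / y
      = ∫ t in (0:ℝ)..c, Complex.exp (((t:ℂ) + I) * y) := by
  have hy' : (y:ℂ) ≠ 0 := Complex.ofReal_ne_zero.2 hy
  have h1 : (∫ t in (0:ℝ)..c, Complex.exp (((t:ℂ) + I) * y))
      = ∫ t in (0:ℝ)..c, Complex.exp (I * y) * Complex.exp ((y:ℂ) * t) := by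
    apply intervalIntegral.integral_congr
    intro t _
    show Complex.exp (((t:ℂ) + I) * y) = Complex.exp (I * y) * Complex.exp ((y:ℂ) * t)
    rw [← Complex.exp_add]; ring_nf
  rw [h1, intervalIntegral.integral_const_mul, integral_exp_mul_complex hy']
  rw [Complex.ofReal_zero, mul_zero, Complex.exp_zero, mul_comm (y:ℂ) (c:ℂ)]
  ring

private lemma aux_swap (c T : ℝ) (hc : 0 < c) (hT : 0 ≤ T) :
    (∫ y in (-T)..(0:ℝ), ∫ t in (0:ℝ)..c, Complex.exp (((t:ℂ) + I) * y))
      = ∫ t in (0:ℝ)..c, ∫ y in (-T)..(0:ℝ), Complex.exp (((t:ℂ) + I) * y) := by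
  have hT' : (-T) ≤ 0 := by linarith
  rw [intervalIntegral.integral_of_le hT']
  simp only [intervalIntegral.integral_of_le hc.le, intervalIntegral.integral_of_le hT']
  apply MeasureTheory.integral_integral_swap
  rw [MeasureTheory.Measure.prod_restrict]
  have hcont : Continuous (fun p : ℝ × ℝ => Complex.exp (((p.2 : ℂ) + I) * p.1)) := by
    fun_prop
  have : MeasureTheory.IntegrableOn (fun p : ℝ × ℝ => Complex.exp (((p.2 : ℂ) + I) * p.1))
      (Set.Icc (-T) 0 ×ˢ Set.Icc 0 c)
      (MeasureTheory.volume.prod MeasureTheory.volume) := by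
    rw [← MeasureTheory.Measure.volume_eq_prod]
    exact hcont.continuousOn.integrableOn_compact (isCompact_Icc.prod isCompact_Icc)
  exact this.mono_set (Set.prod_mono Set.Ioc_subset_Icc_self Set.Ioc_subset_Icc_self)

private lemma aux_inner (t T : ℝ) :
    (∫ y in (-T)..(0:ℝ), Complex.exp (((t:ℂ) + I) * y))
      = (1 - Complex.exp (-(((t:ℂ) + I) * T))) / ((t:ℂ) + I) := by
  rw [integral_exp_mul_complex (aux_ne t)]
  rw [Complex.ofReal_zero, mul_zero, Complex.exp_zero, Complex.ofReal_neg]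
  ring_nf

private lemma aux_value (c : ℝ) :
    (∫ t in (0:ℝ)..c, ((t:ℂ) + I)⁻¹) = Complex.log ((c:ℂ) + I) - Real.pi/2 * I := by
  have hder : ∀ t ∈ Set.uIcc (0:ℝ) c,
      HasDerivAt (fun t : ℝ => Complex.log ((t:ℂ) + I)) (((t:ℂ)+I)⁻¹) t := by
    intro t _
    have h1 : HasDerivAt (fun z : ℂ => Complex.log (z + I)) (((t:ℂ)+I)⁻¹) (t:ℂ) := by
      have hl := Complex.hasDerivAt_log (z := (t:ℂ)+I) (Or.inr (by simp))
      have h := hl.comp (t:ℂ) ((hasDerivAt_id ((t:ℂ))).add_const I)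
      simp only [mul_one] at h
      exact h
    exact h1.comp_ofReal
  have hint : IntervalIntegrable (fun t : ℝ => ((t:ℂ)+I)⁻¹) MeasureTheory.volume 0 c := by
    apply Continuous.intervalIntegrable
    exact Continuous.inv₀ (by fun_prop) aux_ne
  rw [intervalIntegral.integral_eq_sub_of_hasDerivAt hder hint]
  rw [Complex.ofReal_zero, zero_add, Complex.log_I]

private lemma aux_error (c : ℝ) (hc : 0 < c) :
    Tendsto (fun T : ℝ => ∫ t in (0:ℝ)..c,
        Complex.exp (-(((t:ℂ) + I) * T)) / ((t:ℂ) + I)) atTop (nhds 0) := by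
  rw [tendsto_zero_iff_norm_tendsto_zero]
  apply squeeze_zero' (.of_forall fun T => norm_nonneg _) _ tendsto_inv_atTop_zero
  filter_upwards [eventually_gt_atTop 0] with T hT
  have hbd : ∀ t ∈ Set.Icc (0:ℝ) c,
      ‖Complex.exp (-(((t:ℂ) + I) * T)) / ((t:ℂ) + I)‖ ≤ Real.exp (-(T * t)) := by
    intro t ht
    rw [norm_div, Complex.norm_exp]
    have h1 : (1:ℝ) ≤ ‖(t:ℂ) + I‖ := by
      simpa using Complex.abs_im_le_norm ((t:ℂ) + I)
    have h2 : (-(((t:ℂ) + I) * T)).re = -(T * t) := by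
      simp [Complex.mul_re]; ring
    rw [h2]
    exact div_le_self (Real.exp_nonneg _) h1
  calc ‖∫ t in (0:ℝ)..c, Complex.exp (-(((t:ℂ) + I) * T)) / ((t:ℂ) + I)‖
      ≤ ∫ t in (0:ℝ)..c, ‖Complex.exp (-(((t:ℂ) + I) * T)) / ((t:ℂ) + I)‖ :=
        intervalIntegral.norm_integral_le_integral_norm hc.le
    _ ≤ ∫ t in (0:ℝ)..c, Real.exp (-(T * t)) := by
        apply intervalIntegral.integral_mono_on hc.le _ _ hbd
        · apply Continuous.intervalIntegrable
          apply Continuous.norm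
          exact Continuous.div (by fun_prop) (by fun_prop) aux_ne
        · apply Continuous.intervalIntegrable; fun_prop
    _ ≤ T⁻¹ := by
        have hD : ∀ t : ℝ, HasDerivAt (fun t : ℝ => -(T⁻¹ * Real.exp (-(T * t))))
            (Real.exp (-(T * t))) t := by
          intro t
          have h1 : HasDerivAt (fun t : ℝ => -(T * t)) (-T) t := by
            have h := ((hasDerivAt_id t).const_mul T).neg
            simp only [mul_one] at h
            exact h
          have h2 := (Real.hasDerivAt_exp (-(T * t))).comp t h1
          have h3 := (h2.const_mul T⁻¹).neg
          have e : -(T⁻¹ * (Real.exp (-(T * t)) * -T)) = Real.exp (-(T * t)) := by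
            rw [mul_neg, mul_neg, neg_neg, mul_comm T⁻¹, mul_assoc, mul_inv_cancel₀ hT.ne', mul_one]
          rw [e] at h3
          exact h3
        rw [intervalIntegral.integral_eq_sub_of_hasDerivAt (fun t _ => hD t)
          (by apply Continuous.intervalIntegrable; fun_prop)]
        have h4 : Real.exp (-(T * c)) ≤ 1 := Real.exp_le_one_iff.2 (by nlinarith)
        have h5 : (0:ℝ) < Real.exp (-(T * c)) := Real.exp_pos _
        rw [mul_zero, neg_zero, Real.exp_zero]
        have h6 : (0:ℝ) < T⁻¹ := inv_pos.2 hT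
        nlinarith

private lemma aux_target (c : ℝ) (hc : 0 < c) :
    Complex.log ((c:ℂ) + I) - Real.pi/2 * I
      = (((1 / 2) * Real.log (1 + c ^ 2) : ℝ) : ℂ) -
        Complex.I * ((Real.pi / 2 - Real.arctan (1 / c) : ℝ) : ℂ) := by
  have harg : Complex.arg ((c:ℂ) + I) = Real.arctan (1/c) := by
    have h1 : Real.tan (Complex.arg ((c:ℂ)+I)) = 1/c := by
      rw [Complex.tan_arg]; simp
    have h2 : Complex.arg ((c:ℂ)+I) < Real.pi/2 :=
      Complex.arg_lt_pi_div_two_iff.2 (Or.inl (by simpa using hc))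
    have h3 : -(Real.pi/2) < Complex.arg ((c:ℂ)+I) :=
      Complex.neg_pi_div_two_lt_arg_iff.2 (Or.inl (by simpa using hc))
    rw [← h1, Real.arctan_tan h3 h2]
  have habs : (Complex.log ((c:ℂ)+I)).re = (1/2) * Real.log (1 + c^2) := by
    rw [Complex.log_re, Complex.norm_def]
    have : Complex.normSq ((c:ℂ)+I) = 1 + c^2 := by
      simp [Complex.normSq_apply]; ring
    rw [this, Real.log_sqrt (by positivity)]; ring
  have hlog : Complex.log ((c:ℂ)+I)
      = (((1/2) * Real.log (1+c^2) : ℝ) : ℂ) + ((Real.arctan (1/c) : ℝ) : ℂ) * I := by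
    apply Complex.ext
    · simpa [-Complex.ofReal_arctan] using habs
    · simpa [-Complex.ofReal_arctan, Complex.log_im] using harg
  rw [hlog]
  push_cast
  ring

/-- Explicit evaluation of the improper integral
`∫_{-∞}^{0} e^{iy} (e^{cy} - 1)/y dy = (1/2) log(1 + c²) - i(π/2 - arctan(1/c))`
for `c > 0` (used in the Appendix in the derivation of the inverse
Fourier transform). -/
theorem improper_integral_evaluation (c : ℝ) (hc : 0 < c) :
    Tendsto
      (fun T : ℝ =>
        ∫ y in (-T)..(0 : ℝ),
          Complex.exp (Complex.I * (y : ℂ)) *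
            (Complex.exp ((c : ℂ) * (y : ℂ)) - 1) / (y : ℂ))
      atTop
      (nhds ((((1 / 2) * Real.log (1 + c ^ 2) : ℝ) : ℂ) -
        Complex.I * ((Real.pi / 2 - Real.arctan (1 / c) : ℝ) : ℂ))) := by
  have hintinv : IntervalIntegrable (fun t : ℝ => ((t:ℂ)+I)⁻¹) MeasureTheory.volume 0 c :=
    Continuous.intervalIntegrable (Continuous.inv₀ (by fun_prop) aux_ne) _ _
  have hIdent : ∀ T : ℝ, 0 ≤ T →
      (∫ y in (-T)..(0 : ℝ),
          Complex.exp (Complex.I * (y : ℂ)) *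
            (Complex.exp ((c : ℂ) * (y : ℂ)) - 1) / (y : ℂ))
        = (∫ t in (0:ℝ)..c, ((t:ℂ) + I)⁻¹) -
          ∫ t in (0:ℝ)..c, Complex.exp (-(((t:ℂ) + I) * T)) / ((t:ℂ) + I) := by
    intro T hT
    have h0 : ∀ᵐ y : ℝ, y ≠ 0 := by
      rw [MeasureTheory.ae_iff]
      have hs : {y : ℝ | ¬ y ≠ 0} = {0} := by ext y; simp
      rw [hs]
      exact MeasureTheory.measure_singleton 0
    have step1 : (∫ y in (-T)..(0 : ℝ),
          Complex.exp (Complex.I * (y : ℂ)) *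
            (Complex.exp ((c : ℂ) * (y : ℂ)) - 1) / (y : ℂ))
        = ∫ y in (-T)..(0:ℝ), ∫ t in (0:ℝ)..c, Complex.exp (((t:ℂ) + I) * y) := by
      apply intervalIntegral.integral_congr_ae
      filter_upwards [h0] with y hy _ using aux_pointwise c y hy
    rw [step1, aux_swap c T hc hT]
    have step2 : (∫ t in (0:ℝ)..c, ∫ y in (-T)..(0:ℝ), Complex.exp (((t:ℂ) + I) * y))
        = ∫ t in (0:ℝ)..c,
            (((t:ℂ) + I)⁻¹ - Complex.exp (-(((t:ℂ) + I) * T)) / ((t:ℂ) + I)) := by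
      apply intervalIntegral.integral_congr
      intro t _
      show (∫ y in (-T)..(0:ℝ), Complex.exp (((t:ℂ) + I) * y))
        = ((t:ℂ) + I)⁻¹ - Complex.exp (-(((t:ℂ) + I) * T)) / ((t:ℂ) + I)
      rw [aux_inner t T, sub_div, one_div]
    rw [step2]
    apply intervalIntegral.integral_sub hintinv
    apply Continuous.intervalIntegrable
    exact Continuous.div (by fun_prop) (by fun_prop) aux_ne
  have hlim : Tendsto (fun T : ℝ =>
      (∫ t in (0:ℝ)..c, ((t:ℂ) + I)⁻¹) -
        ∫ t in (0:ℝ)..c, Complex.exp (-(((t:ℂ) + I) * T)) / ((t:ℂ) + I)) atTop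
      (nhds ((((1 / 2) * Real.log (1 + c ^ 2) : ℝ) : ℂ) -
        Complex.I * ((Real.pi / 2 - Real.arctan (1 / c) : ℝ) : ℂ))) := by
    have h := Tendsto.sub (tendsto_const_nhds
      (x := ∫ t in (0:ℝ)..c, ((t:ℂ) + I)⁻¹) (f := atTop)) (aux_error c hc)
    rw [show (∫ t in (0:ℝ)..c, ((t:ℂ) + I)⁻¹) - 0
        = (((1 / 2) * Real.log (1 + c ^ 2) : ℝ) : ℂ) -
          Complex.I * ((Real.pi / 2 - Real.arctan (1 / c) : ℝ) : ℂ) from by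
      rw [sub_zero, aux_value c]; exact aux_target c hc] at h
    exact h
  apply hlim.congr'
  filter_upwards [eventually_ge_atTop 0] with T hT
  exact (hIdent T hT).symm
end
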